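/- arXiv:1005.3906 — 7 statements merged into one kernel-verified Lean document; each statement's English description precedes it below -/
import Mathlib

section
/- Let G be a group and let δ : H₂(G, ℤ) → H₂(G^{ab}, ℤ) be the homomorphism induced by the abelianization map G → G^{ab}. Then the second and third terms of the lower central series of G coincide, Γ₂(G) = Γ₃(G), if and only if δ is surjective. -/
/-- The differential `d₂ : C₂(G) → C₁(G)` of the inhomogeneous bar complex of `G` with
trivial `ℤ`-coefficients: `d₂(g,h) = h - gh + g`. -/
noncomputable def barD2 (G : Type*) [Group G] : ((G × G) →₀ ℤ) →ₗ[ℤ] (G →₀ ℤ) :=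
  Finsupp.lsum ℤ fun p =>
    (Finsupp.lsingle p.2 : ℤ →ₗ[ℤ] (G →₀ ℤ)) - Finsupp.lsingle (p.1 * p.2) +
      Finsupp.lsingle p.1

/-- The differential `d₃ : C₃(G) → C₂(G)` of the inhomogeneous bar complex:
`d₃(g,h,k) = (h,k) - (gh,k) + (g,hk) - (g,h)`. -/
noncomputable def barD3 (G : Type*) [Group G] : ((G × G × G) →₀ ℤ) →ₗ[ℤ] ((G × G) →₀ ℤ) :=
  Finsupp.lsum ℤ fun p =>
    (Finsupp.lsingle (p.2.1, p.2.2) : ℤ →ₗ[ℤ] ((G × G) →₀ ℤ)) -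
        Finsupp.lsingle (p.1 * p.2.1, p.2.2) +
      Finsupp.lsingle (p.1, p.2.1 * p.2.2) - Finsupp.lsingle (p.1, p.2.1)

/-- The second group homology `H₂(G, ℤ)` with trivial integer coefficients, computed from the
inhomogeneous bar complex as `ker d₂ / im d₃`. -/
noncomputable def H2Group (G : Type*) [Group G] :=
  LinearMap.ker (barD2 G) ⧸
    Submodule.comap (LinearMap.ker (barD2 G)).subtype (LinearMap.range (barD3 G))

noncomputable instance (G : Type*) [Group G] : AddCommGroup (H2Group G) :=
  inferInstanceAs (AddCommGroup (_ ⧸ _))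

noncomputable instance (G : Type*) [Group G] : Module ℤ (H2Group G) :=
  inferInstanceAs (Module ℤ (_ ⧸ _))


section

variable {G : Type*} [Group G]

theorem barD2_single (g h : G) (n : ℤ) :
    barD2 G (Finsupp.single (g, h) n) =
      Finsupp.single h n - Finsupp.single (g * h) n + Finsupp.single g n := by
  simp [barD2, Finsupp.lsum_single]

theorem barD3_single (g h k : G) (n : ℤ) :
    barD3 G (Finsupp.single (g, h, k) n) =
      Finsupp.single (h, k) n - Finsupp.single (g * h, k) n +
        Finsupp.single (g, h * k) n - Finsupp.single (g, h) n := by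
  simp [barD3, Finsupp.lsum_single]

end
section
variable {G : Type*} [Group G]

local notation "A" => Abelianization G

/-- chain map in degree 2 -/
noncomputable def piTwo (G : Type*) [Group G] :
    ((G × G) →₀ ℤ) →ₗ[ℤ] ((Abelianization G × Abelianization G) →₀ ℤ) :=
  Finsupp.lmapDomain ℤ ℤ (fun p : G × G => (Abelianization.of p.1, Abelianization.of p.2))

noncomputable def piOne (G : Type*) [Group G] : (G →₀ ℤ) →ₗ[ℤ] (Abelianization G →₀ ℤ) :=
  Finsupp.lmapDomain ℤ ℤ (Abelianization.of : G → Abelianization G)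

theorem piTwo_single (g h : G) (n : ℤ) :
    piTwo G (Finsupp.single (g, h) n) =
      Finsupp.single (Abelianization.of g, Abelianization.of h) n := by
  simp [piTwo, Finsupp.lmapDomain_apply, Finsupp.mapDomain_single]

theorem piOne_single (g : G) (n : ℤ) :
    piOne G (Finsupp.single g n) = Finsupp.single (Abelianization.of g) n := by
  simp [piOne, Finsupp.lmapDomain_apply, Finsupp.mapDomain_single]

theorem chainMap_comm :
    (barD2 (Abelianization G)).comp (piTwo G) = (piOne G).comp (barD2 G) := by
  apply Finsupp.lhom_ext
  rintro ⟨g, h⟩ n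
  simp [piTwo_single, barD2_single, piOne_single, map_add, map_sub]

theorem piTwo_mem_ker {x : (G × G) →₀ ℤ} (hx : x ∈ LinearMap.ker (barD2 G)) :
    piTwo G x ∈ LinearMap.ker (barD2 (Abelianization G)) := by
  rw [LinearMap.mem_ker] at hx ⊢
  have := congrArg (fun f => f x) chainMap_comm
  simpa [hx] using this

end
section MU
variable {G : Type*} [Group G]
open scoped commutatorElement IsMulCommutative
attribute [-simp] Subgroup.lowerCentralSeries_succ Subgroup.lowerCentralSeries_zero
noncomputable def sec (a : Abelianization G) : G := Quotient.out a
lemma of_sec (a : Abelianization G) : Abelianization.of (sec a) = a := Quotient.out_eq' a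
lemma of_eq_one {g : G} (h : g ∈ commutator G) : Abelianization.of g = 1 :=
  (QuotientGroup.eq_one_iff g).mpr h
lemma mem_of_of_eq_one {g : G} (h : Abelianization.of g = 1) : g ∈ commutator G :=
  (QuotientGroup.eq_one_iff g).mp h
noncomputable def qE : G →* G ⧸ (⊤ : Subgroup G).lowerCentralSeries 2 := QuotientGroup.mk' _
lemma lcs2_le_commutator : (⊤ : Subgroup G).lowerCentralSeries 2 ≤ commutator G := by
  have := Subgroup.lowerCentralSeries_antitone (S := (⊤ : Subgroup G)) (one_le_two)
  rwa [Subgroup.top_lowerCentralSeries_one] at this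
noncomputable def pbar : (G ⧸ (⊤ : Subgroup G).lowerCentralSeries 2) →* Abelianization G :=
  QuotientGroup.lift _ Abelianization.of
    (fun x hx => of_eq_one (lcs2_le_commutator hx))
@[simp] lemma pbar_qE (g : G) : pbar (qE g) = Abelianization.of g := rfl
lemma central_of_pbar_eq_one {e : G ⧸ (⊤ : Subgroup G).lowerCentralSeries 2} (h : pbar e = 1) :
    e ∈ Subgroup.center (G ⧸ (⊤ : Subgroup G).lowerCentralSeries 2) := by
  obtain ⟨x, rfl⟩ := QuotientGroup.mk'_surjective _ e
  have hx : x ∈ (⊤ : Subgroup G).lowerCentralSeries 1 := by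
    rw [Subgroup.top_lowerCentralSeries_one]; exact mem_of_of_eq_one h
  rw [Subgroup.mem_center_iff]
  intro e'
  obtain ⟨y, rfl⟩ := QuotientGroup.mk'_surjective _ e'
  rw [← map_mul, ← map_mul]
  have : ((y * x : G) : G ⧸ (⊤ : Subgroup G).lowerCentralSeries 2) = ((x * y : G) : _) := by
    rw [QuotientGroup.eq]
    have : (y*x)⁻¹ * (x*y) = ⁅x⁻¹, y⁻¹⁆ := by group
    rw [this]
    exact Subgroup.commutator_mem_commutator (inv_mem hx) (Subgroup.mem_top _)
  exact this

noncomputable def XE (a : Abelianization G) : G ⧸ (⊤ : Subgroup G).lowerCentralSeries 2 := qE (sec a)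

lemma pbar_XE (a : Abelianization G) : pbar (XE a) = a := by
  simp [XE, of_sec]

noncomputable def fE (a b : Abelianization G) : G ⧸ (⊤ : Subgroup G).lowerCentralSeries 2 :=
  XE a * XE b * (XE (a * b))⁻¹

lemma fE_central (a b : Abelianization G) :
    fE a b ∈ Subgroup.center (G ⧸ (⊤ : Subgroup G).lowerCentralSeries 2) := by
  apply central_of_pbar_eq_one
  simp only [fE, map_mul, map_inv, pbar_XE]
  group

lemma XE_mul (a b : Abelianization G) : XE a * XE b = fE a b * XE (a * b) := by
  simp [fE, mul_assoc]

noncomputable def tE (g : G) : G ⧸ (⊤ : Subgroup G).lowerCentralSeries 2 := (XE (Abelianization.of g))⁻¹ * qE g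

lemma tE_central (g : G) : tE g ∈ Subgroup.center (G ⧸ (⊤ : Subgroup G).lowerCentralSeries 2) := by
  apply central_of_pbar_eq_one
  simp [tE, pbar_XE]

lemma qE_eq (g : G) : qE g = XE (Abelianization.of g) * tE g := by
  simp [tE, mul_assoc]

lemma swap_central {u : G ⧸ (⊤ : Subgroup G).lowerCentralSeries 2}
    (hu : u ∈ Subgroup.center (G ⧸ (⊤ : Subgroup G).lowerCentralSeries 2)) (x : G ⧸ (⊤ : Subgroup G).lowerCentralSeries 2) :
    x * u = u * x := Subgroup.mem_center_iff.mp hu x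

/-- the cocycle identity -/
lemma fE_cocycle (a b c : Abelianization G) :
    fE a b * fE (a * b) c = fE b c * fE a (b * c) := by
  have key : fE a b * fE (a * b) c * XE (a * b * c) = fE b c * fE a (b * c) * XE (a * b * c) := by
    calc fE a b * fE (a * b) c * XE (a * b * c)
        = fE a b * (fE (a * b) c * XE ((a * b) * c)) := by rw [mul_assoc]
      _ = fE a b * (XE (a * b) * XE c) := by rw [← XE_mul]
      _ = (fE a b * XE (a * b)) * XE c := by rw [mul_assoc]
      _ = (XE a * XE b) * XE c := by rw [← XE_mul]
      _ = XE a * (XE b * XE c) := by rw [mul_assoc]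
      _ = XE a * (fE b c * XE (b * c)) := by rw [← XE_mul]
      _ = (XE a * fE b c) * XE (b * c) := by rw [mul_assoc]
      _ = (fE b c * XE a) * XE (b * c) := by rw [swap_central (fE_central b c)]
      _ = fE b c * (XE a * XE (b * c)) := by rw [mul_assoc]
      _ = fE b c * (fE a (b * c) * XE (a * (b * c))) := by rw [← XE_mul]
      _ = fE b c * fE a (b * c) * XE (a * b * c) := by rw [mul_assoc, mul_assoc]
  exact mul_right_cancel key

lemma fE_tE (g h : G) :
    fE (Abelianization.of g) (Abelianization.of h) * tE g * tE h = tE (g * h) := by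
  have key : XE (Abelianization.of g * Abelianization.of h) *
      (fE (Abelianization.of g) (Abelianization.of h) * tE g * tE h) =
      XE (Abelianization.of g * Abelianization.of h) * tE (g * h) := by
    calc XE (Abelianization.of g * Abelianization.of h) *
        (fE (Abelianization.of g) (Abelianization.of h) * tE g * tE h)
        = (XE (Abelianization.of g * Abelianization.of h) *
            fE (Abelianization.of g) (Abelianization.of h)) * (tE g * tE h) := by
          simp [mul_assoc]
      _ = (fE (Abelianization.of g) (Abelianization.of h) *
            XE (Abelianization.of g * Abelianization.of h)) * (tE g * tE h) := by
          rw [swap_central (fE_central _ _)]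
      _ = (XE (Abelianization.of g) * XE (Abelianization.of h)) * (tE g * tE h) := by
          rw [← XE_mul]
      _ = XE (Abelianization.of g) * ((XE (Abelianization.of h) * tE g) * tE h) := by
          simp [mul_assoc]
      _ = XE (Abelianization.of g) * ((tE g * XE (Abelianization.of h)) * tE h) := by
          rw [swap_central (tE_central g)]
      _ = (XE (Abelianization.of g) * tE g) * (XE (Abelianization.of h) * tE h) := by
          simp [mul_assoc]
      _ = qE g * qE h := by rw [← qE_eq, ← qE_eq]
      _ = qE (g * h) := by rw [map_mul]
      _ = XE (Abelianization.of (g * h)) * tE (g * h) := qE_eq _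
      _ = XE (Abelianization.of g * Abelianization.of h) * tE (g * h) := by rw [map_mul]
  exact mul_left_cancel key

noncomputable def fC (a b : Abelianization G) :
    Subgroup.center (G ⧸ (⊤ : Subgroup G).lowerCentralSeries 2) := ⟨fE a b, fE_central a b⟩

noncomputable def tC (g : G) : Subgroup.center (G ⧸ (⊤ : Subgroup G).lowerCentralSeries 2) :=
  ⟨tE g, tE_central g⟩

lemma fC_cocycle (a b c : Abelianization G) :
    fC a b * fC (a * b) c = fC b c * fC a (b * c) := Subtype.ext (fE_cocycle a b c)

lemma fC_tC (g h : G) :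
    fC (Abelianization.of g) (Abelianization.of h) * tC g * tC h = tC (g * h) :=
  Subtype.ext (fE_tE g h)

noncomputable def FM (a b : Abelianization G) :
    Additive (Subgroup.center (G ⧸ (⊤ : Subgroup G).lowerCentralSeries 2)) := Additive.ofMul (fC a b)

noncomputable def TM (g : G) :
    Additive (Subgroup.center (G ⧸ (⊤ : Subgroup G).lowerCentralSeries 2)) := Additive.ofMul (tC g)

lemma FM_cocycle (a b c : Abelianization G) :
    FM a b + FM (a * b) c = FM b c + FM a (b * c) := congrArg Additive.ofMul (fC_cocycle a b c)

lemma FM_TM (g h : G) :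
    FM (Abelianization.of g) (Abelianization.of h) + TM g + TM h = TM (g * h) :=
  congrArg Additive.ofMul (fC_tC g h)

noncomputable def muH : ((Abelianization G × Abelianization G) →₀ ℤ) →ₗ[ℤ]
    Additive (Subgroup.center (G ⧸ (⊤ : Subgroup G).lowerCentralSeries 2)) :=
  Finsupp.lsum ℤ fun p => LinearMap.toSpanSingleton ℤ _ (FM p.1 p.2)

noncomputable def lamH : (G →₀ ℤ) →ₗ[ℤ]
    Additive (Subgroup.center (G ⧸ (⊤ : Subgroup G).lowerCentralSeries 2)) :=
  Finsupp.lsum ℤ fun g => LinearMap.toSpanSingleton ℤ _ (TM g)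

lemma muH_single (a b : Abelianization G) (n : ℤ) :
    muH (Finsupp.single (a, b) n) = n • FM a b := by
  simp [muH, Finsupp.lsum_single, LinearMap.toSpanSingleton_apply]

lemma muH_barD3 : (muH (G := G)).comp (barD3 (Abelianization G)) = 0 := by
  apply Finsupp.lhom_ext
  rintro ⟨g, h, k⟩ n
  simp only [LinearMap.comp_apply, LinearMap.zero_apply, barD3_single, map_add, map_sub,
    muH_single]
  rw [← smul_sub, ← smul_add, ← smul_sub]
  rw [show FM h k - FM (g * h) k + FM g (h * k) - FM g h = 0 from ?_, smul_zero]
  rw [sub_eq_zero, eq_sub_of_add_eq (FM_cocycle g h k).symm]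
  abel

lemma muH_piTwo_barD2 :
    (muH (G := G)).comp (piTwo G) = -((lamH (G := G)).comp (barD2 G)) := by
  apply Finsupp.lhom_ext
  rintro ⟨g, h⟩ n
  simp only [LinearMap.comp_apply, LinearMap.neg_apply, piTwo_single, barD2_single, map_add,
    map_sub, muH_single]
  have h1 : lamH (G := G) (Finsupp.single h n) = n • TM h := by
    simp [lamH, Finsupp.lsum_single, LinearMap.toSpanSingleton_apply]
  have h2 : lamH (G := G) (Finsupp.single (g * h) n) = n • TM (g * h) := by
    simp [lamH, Finsupp.lsum_single, LinearMap.toSpanSingleton_apply]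
  have h3 : lamH (G := G) (Finsupp.single g n) = n • TM g := by
    simp [lamH, Finsupp.lsum_single, LinearMap.toSpanSingleton_apply]
  rw [h1, h2, h3, ← smul_sub, ← smul_add, ← smul_neg]
  congr 1
  have e : FM (Abelianization.of g) (Abelianization.of h) = TM (g * h) - TM g - TM h :=
    by rw [← FM_TM g h]; abel
  rw [e]; abel

lemma muH_ker (x : (G × G) →₀ ℤ) (hx : x ∈ LinearMap.ker (barD2 G)) :
    muH (piTwo G x) = 0 := by
  have := congrArg (fun f => f x) (muH_piTwo_barD2 (G := G))
  simp only [LinearMap.comp_apply, LinearMap.neg_apply] at this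
  rw [this, LinearMap.mem_ker.mp hx, map_zero, neg_zero]

lemma muH_range (r : (Abelianization G × Abelianization G) →₀ ℤ)
    (hr : r ∈ LinearMap.range (barD3 (Abelianization G))) : muH r = 0 := by
  obtain ⟨w, rfl⟩ := hr
  have := congrArg (fun f => f w) (muH_barD3 (G := G))
  simpa using this

lemma z_mem_ker (a b : G) :
    (Finsupp.single (Abelianization.of a, Abelianization.of b) (1 : ℤ) -
      Finsupp.single (Abelianization.of b, Abelianization.of a) 1) ∈
      LinearMap.ker (barD2 (Abelianization G)) := by
  rw [LinearMap.mem_ker, map_sub, barD2_single, barD2_single,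
    mul_comm (Abelianization.of b) (Abelianization.of a)]
  abel

lemma qE_comm_of_FM (a b : G)
    (hF : FM (Abelianization.of a) (Abelianization.of b) =
      FM (Abelianization.of b) (Abelianization.of a)) :
    ⁅a, b⁆ ∈ (⊤ : Subgroup G).lowerCentralSeries 2 := by
  have hfC : fC (Abelianization.of a) (Abelianization.of b) =
      fC (Abelianization.of b) (Abelianization.of a) := hF
  have hfE : fE (Abelianization.of a) (Abelianization.of b) =
      fE (Abelianization.of b) (Abelianization.of a) := congrArg Subtype.val hfC
  set α := Abelianization.of a
  set β := Abelianization.of b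
  have hXE : XE α * XE β = XE β * XE α := by
    rw [XE_mul, XE_mul, hfE, mul_comm β α]
  have hq : qE a * qE b = qE b * qE a := by
    rw [qE_eq a, qE_eq b]
    calc XE α * tE a * (XE β * tE b)
        = (XE α * XE β) * (tE a * tE b) := by
          rw [mul_assoc, mul_assoc, ← mul_assoc (tE a), ← swap_central (tE_central a) (XE β),
            mul_assoc]
      _ = (XE β * XE α) * (tE a * tE b) := by rw [hXE]
      _ = XE β * (XE α * (tE a * tE b)) := by rw [mul_assoc]
      _ = XE β * (tE b * (XE α * tE a)) := by
          congr 1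
          calc XE α * (tE a * tE b) = XE α * (tE b * tE a) := by
                rw [swap_central (tE_central b) (tE a)]
            _ = (XE α * tE b) * tE a := by rw [← mul_assoc]
            _ = (tE b * XE α) * tE a := by rw [swap_central (tE_central b)]
            _ = tE b * (XE α * tE a) := by rw [mul_assoc]
      _ = XE β * tE b * (XE α * tE a) := by rw [← mul_assoc]
  have : qE ⁅a, b⁆ = 1 := by
    rw [map_commutatorElement, commutatorElement_eq_one_iff_mul_comm]
    exact hq
  exact (QuotientGroup.eq_one_iff _).mp this

lemma piTwo_apply (x : (G × G) →₀ ℤ) :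
    piTwo G x = Finsupp.mapDomain
      (fun p : G × G => (Abelianization.of p.1, Abelianization.of p.2)) x := rfl


lemma surj_imp_lcs_eq (δ : H2Group G →ₗ[ℤ] H2Group (Abelianization G))
    (hδ : ∀ (x : (G × G) →₀ ℤ) (hx : x ∈ LinearMap.ker (barD2 G))
      (hy : Finsupp.mapDomain
          (fun p : G × G => (Abelianization.of p.1, Abelianization.of p.2)) x ∈
        LinearMap.ker (barD2 (Abelianization G))),
      δ (Submodule.Quotient.mk ⟨x, hx⟩) =
        Submodule.Quotient.mk
          ⟨Finsupp.mapDomain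
              (fun p : G × G => (Abelianization.of p.1, Abelianization.of p.2)) x, hy⟩)
    (hs : Function.Surjective δ) : (⊤ : Subgroup G).lowerCentralSeries 1 = (⊤ : Subgroup G).lowerCentralSeries 2 := by
  refine le_antisymm ?_ (by rw [Subgroup.top_lowerCentralSeries_one]; exact lcs2_le_commutator)
  rw [Subgroup.top_lowerCentralSeries_one, commutator_def, Subgroup.commutator_le]
  intro a _ b _
  set z : (Abelianization G × Abelianization G) →₀ ℤ :=
    Finsupp.single (Abelianization.of a, Abelianization.of b) (1 : ℤ) -
      Finsupp.single (Abelianization.of b, Abelianization.of a) 1 with hzdef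
  have hz : z ∈ LinearMap.ker (barD2 (Abelianization G)) := z_mem_ker a b
  obtain ⟨ξ, hξ⟩ := hs (Submodule.Quotient.mk ⟨z, hz⟩)
  obtain ⟨⟨x, hx⟩, rfl⟩ := Submodule.Quotient.mk_surjective _ ξ
  have hy : Finsupp.mapDomain
      (fun p : G × G => (Abelianization.of p.1, Abelianization.of p.2)) x ∈
      LinearMap.ker (barD2 (Abelianization G)) := by
    rw [← piTwo_apply]; exact piTwo_mem_ker hx
  rw [hδ x hx hy] at hξ
  replace hξ := (Submodule.Quotient.eq _).mp hξ
  have hmem : piTwo G x - z ∈ LinearMap.range (barD3 (Abelianization G)) := by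
    have := Submodule.mem_comap.mp hξ
    simpa [piTwo_apply] using this
  have h0 : muH (piTwo G x - z) = 0 := muH_range _ hmem
  have h1 : muH (piTwo G x) = 0 := muH_ker x hx
  have hz0 : muH (G := G) z = 0 := by
    rw [map_sub, h1, zero_sub, neg_eq_zero] at h0
    exact h0
  have hF : FM (Abelianization.of a) (Abelianization.of b) =
      FM (Abelianization.of b) (Abelianization.of a) := by
    rw [hzdef, map_sub, muH_single, muH_single, one_smul, one_smul, sub_eq_zero] at hz0
    exact hz0
  exact qE_comm_of_FM a b hF

end MU

section FWD
variable {G : Type*} [Group G]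

/-- The key predicate: `c` maps to `1` in the abelianization, and `[c]` is the boundary of a
2-chain whose image in the abelianized complex is `(1,1)` modulo boundaries. -/
def QP (c : G) : Prop :=
  Abelianization.of c = 1 ∧ ∃ V : (G × G) →₀ ℤ, barD2 G V = Finsupp.single c 1 ∧
    piTwo G V - Finsupp.single ((1 : Abelianization G), (1 : Abelianization G)) 1 ∈
      LinearMap.range (barD3 (Abelianization G))

lemma QP_one : QP (1 : G) := by
  refine ⟨map_one _, Finsupp.single (1, 1) 1, ?_, ?_⟩
  · rw [barD2_single]; simp
  · rw [piTwo_single]; simp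

lemma QP_mul {c₁ c₂ : G} (h₁ : QP c₁) (h₂ : QP c₂) : QP (c₁ * c₂) := by
  obtain ⟨ha₁, V₁, hd₁, hr₁⟩ := h₁
  obtain ⟨ha₂, V₂, hd₂, hr₂⟩ := h₂
  refine ⟨by rw [map_mul, ha₁, ha₂, mul_one], V₁ + V₂ - Finsupp.single (c₁, c₂) 1, ?_, ?_⟩
  · rw [map_sub, map_add, hd₁, hd₂, barD2_single]; abel
  · have : piTwo G (V₁ + V₂ - Finsupp.single (c₁, c₂) 1) -
        Finsupp.single ((1 : Abelianization G), (1 : Abelianization G)) 1 =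
        (piTwo G V₁ - Finsupp.single (1, 1) 1) + (piTwo G V₂ - Finsupp.single (1, 1) 1) := by
      rw [map_sub, map_add, piTwo_single, ha₁, ha₂]; abel
    rw [this]; exact add_mem hr₁ hr₂

lemma QP_inv {c : G} (h : QP c) : QP c⁻¹ := by
  obtain ⟨ha, V, hd, hr⟩ := h
  refine ⟨by rw [map_inv, ha, inv_one], Finsupp.single (1, 1) 1 - V +
    Finsupp.single (c⁻¹, c) 1, ?_, ?_⟩
  · rw [map_add, map_sub, hd, barD2_single, barD2_single]
    simp only [one_mul, inv_mul_cancel]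
    abel
  · have : piTwo G (Finsupp.single (1, 1) 1 - V + Finsupp.single (c⁻¹, c) 1) -
        Finsupp.single ((1 : Abelianization G), (1 : Abelianization G)) 1 =
        -(piTwo G V - Finsupp.single (1, 1) 1) := by
      simp only [map_add, map_sub, piTwo_single, map_inv, map_one, ha, inv_one]; abel
    rw [this]; exact neg_mem hr

lemma QP_gen (p q : G) (hp : Abelianization.of p = 1) : QP (p * q * p⁻¹ * q⁻¹) := by
  have hofc : Abelianization.of (p * q * p⁻¹ * q⁻¹) = 1 := by
    simp [map_mul, map_inv, hp, mul_comm]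
  refine ⟨hofc, Finsupp.single (p, p⁻¹) 1 + Finsupp.single (1, 1) 1 -
    Finsupp.single (p, q * p⁻¹) 1 - Finsupp.single (q, p⁻¹) 1 + Finsupp.single (q, q⁻¹) 1 +
    Finsupp.single (1, 1) 1 - Finsupp.single (p * (q * p⁻¹), q⁻¹) 1, ?_, ?_⟩
  · simp only [map_add, map_sub, barD2_single, mul_inv_cancel, one_mul, mul_one,
      inv_mul_cancel]
    rw [show p * (q * p⁻¹) * q⁻¹ = p * q * p⁻¹ * q⁻¹ by group]
    abel
  · refine ⟨Finsupp.single (Abelianization.of q, 1, 1) 1 -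
      Finsupp.single (1, 1, Abelianization.of q) 1, ?_⟩
    simp only [map_add, map_sub, barD3_single, piTwo_single, map_mul, map_inv, map_one, hp,
      inv_one, one_mul, mul_one]
    abel

lemma QP_of_mem (h12 : (⊤ : Subgroup G).lowerCentralSeries 1 = (⊤ : Subgroup G).lowerCentralSeries 2) {c : G}
    (hc : c ∈ (⊤ : Subgroup G).lowerCentralSeries 1) : QP c := by
  rw [h12] at hc
  have hc' : c ∈ Subgroup.closure { x : G | ∃ p ∈ (⊤ : Subgroup G).lowerCentralSeries 1,
      ∃ q ∈ (⊤ : Subgroup G), p * q * p⁻¹ * q⁻¹ = x } := hc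
  refine Subgroup.closure_induction ?_ QP_one (fun x y _ _ hx hy => QP_mul hx hy)
    (fun x _ hx => QP_inv hx) hc'
  rintro x ⟨p, hp, q, -, rfl⟩
  exact QP_gen p q (of_eq_one (by rwa [← Subgroup.top_lowerCentralSeries_one]))

end FWD

section FWD2
variable {G : Type*} [Group G]

lemma piOne_apply (v : G →₀ ℤ) :
    piOne G v = Finsupp.mapDomain (Abelianization.of : G → Abelianization G) v := rfl

lemma exists_good_w (h12 : (⊤ : Subgroup G).lowerCentralSeries 1 = (⊤ : Subgroup G).lowerCentralSeries 2) (v : G →₀ ℤ)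
    (hv : piOne G v = 0) : ∃ w : (G × G) →₀ ℤ, barD2 G w = v ∧
      piTwo G w ∈ LinearMap.range (barD3 (Abelianization G)) := by
  classical
  -- the canonical Γ₂-part of g
  set cg : G → G := fun g => (sec (Abelianization.of g))⁻¹ * g with hcgdef
  have hofcg : ∀ g, Abelianization.of (cg g) = 1 := by
    intro g; simp [hcgdef, of_sec]
  have hQ : ∀ g : G, QP (cg g) := fun g =>
    QP_of_mem h12 (by rw [Subgroup.top_lowerCentralSeries_one]; exact mem_of_of_eq_one (hofcg g))
  set V : G → (G × G) →₀ ℤ := fun g => (hQ g).2.choose with hVdef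
  have hVd2 : ∀ g, barD2 G (V g) = Finsupp.single (cg g) 1 := fun g => (hQ g).2.choose_spec.1
  have hVrange : ∀ g, piTwo G (V g) -
      Finsupp.single ((1 : Abelianization G), (1 : Abelianization G)) 1 ∈
      LinearMap.range (barD3 (Abelianization G)) := fun g => (hQ g).2.choose_spec.2
  refine ⟨(v.sum fun g n => n • V g) -
    (v.sum fun g n => Finsupp.single (sec (Abelianization.of g), cg g) n), ?_, ?_⟩
  · rw [map_sub, map_finsuppSum, map_finsuppSum]
    have e1 : (v.sum fun g n => barD2 G (n • V g)) = v.sum fun g n =>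
        Finsupp.single (cg g) n := by
      apply Finsupp.sum_congr
      intro g _
      rw [map_smul, hVd2, Finsupp.smul_single, smul_eq_mul, mul_one]
    have e2 : (v.sum fun g n => barD2 G (Finsupp.single (sec (Abelianization.of g), cg g) n)) =
        v.sum fun g n => Finsupp.single (cg g) n - Finsupp.single g n +
          Finsupp.single (sec (Abelianization.of g)) n := by
      apply Finsupp.sum_congr
      intro g _
      rw [barD2_single]
      congr 2
      simp [hcgdef]
    rw [e1, e2, Finsupp.sum_add, Finsupp.sum_sub, Finsupp.sum_single]
    have e3 : (v.sum fun g n => Finsupp.single (sec (Abelianization.of g)) n) = 0 := by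
      have : (v.sum fun g n => Finsupp.single (sec (Abelianization.of g)) n) =
          Finsupp.mapDomain (fun g => sec (Abelianization.of g)) v := rfl
      rw [this, show (fun g => sec (Abelianization.of g)) =
        (sec ∘ (Abelianization.of : G → Abelianization G)) from rfl,
        Finsupp.mapDomain_comp, ← piOne_apply, hv, Finsupp.mapDomain_zero]
    rw [e3]
    abel
  · rw [map_sub, map_finsuppSum, map_finsuppSum]
    have e4 : ((v.sum fun g n => piTwo G (n • V g)) -
        v.sum fun g n => piTwo G (Finsupp.single (sec (Abelianization.of g), cg g) n)) =
        v.sum fun g n =>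
          (n • (piTwo G (V g) -
            Finsupp.single ((1 : Abelianization G), (1 : Abelianization G)) 1) +
           n • (barD3 (Abelianization G)
            (Finsupp.single (Abelianization.of g, (1 : Abelianization G),
              (1 : Abelianization G)) 1))) := by
      rw [← Finsupp.sum_sub]
      apply Finsupp.sum_congr
      intro g _
      rw [map_smul, piTwo_single, of_sec, hofcg, barD3_single]
      simp only [mul_one, one_mul]
      simp only [smul_sub, smul_add, Finsupp.smul_single, smul_eq_mul, mul_one]
      abel
    rw [e4]
    apply Submodule.finsuppSum_mem
    intro g _
    exact add_mem (Submodule.smul_mem _ _ (hVrange g))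
      (Submodule.smul_mem _ _ ⟨Finsupp.single (Abelianization.of g, 1, 1) 1, rfl⟩)

lemma lift_cycle (h12 : (⊤ : Subgroup G).lowerCentralSeries 1 = (⊤ : Subgroup G).lowerCentralSeries 2)
    (z : (Abelianization G × Abelianization G) →₀ ℤ)
    (hz : z ∈ LinearMap.ker (barD2 (Abelianization G))) :
    ∃ (x : (G × G) →₀ ℤ) (hx : x ∈ LinearMap.ker (barD2 G)),
      piTwo G x - z ∈ LinearMap.range (barD3 (Abelianization G)) := by
  classical
  set x₀ : (G × G) →₀ ℤ :=
    Finsupp.mapDomain (fun p : Abelianization G × Abelianization G => (sec p.1, sec p.2)) z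
    with hx₀def
  have hpix₀ : piTwo G x₀ = z := by
    rw [piTwo_apply, hx₀def, ← Finsupp.mapDomain_comp]
    have : ((fun p : G × G => (Abelianization.of p.1, Abelianization.of p.2)) ∘
        (fun p : Abelianization G × Abelianization G => (sec p.1, sec p.2))) = id := by
      funext p
      simp [Function.comp, of_sec]
    rw [this, Finsupp.mapDomain_id]
  have hv : piOne G (barD2 G x₀) = 0 := by
    have := congrArg (fun f => f x₀) (chainMap_comm (G := G))
    simp only [LinearMap.comp_apply] at this
    rw [← this, hpix₀, LinearMap.mem_ker.mp hz]
  obtain ⟨w, hw1, hw2⟩ := exists_good_w h12 (barD2 G x₀) hv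
  refine ⟨x₀ - w, ?_, ?_⟩
  · rw [LinearMap.mem_ker, map_sub, hw1, sub_self]
  · rw [map_sub, hpix₀]
    have : z - piTwo G w - z = -(piTwo G w) := by abel
    rw [this]
    exact neg_mem hw2

end FWD2

/-- Let `δ : H₂(G,ℤ) → H₂(Gᵃᵇ,ℤ)` be the homomorphism induced by the abelianization map
`G → Gᵃᵇ` (i.e. induced on homology by the chain map `(g,h) ↦ (ḡ,h̄)`). Then
`Γ₂(G) = Γ₃(G)` if and only if `δ` is surjective. -/
theorem lowerCentralSeries_two_eq_three_iff_H2_surjective (G : Type*) [Group G]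
    (δ : H2Group G →ₗ[ℤ] H2Group (Abelianization G))
    (hδ : ∀ (x : (G × G) →₀ ℤ) (hx : x ∈ LinearMap.ker (barD2 G))
      (hy : Finsupp.mapDomain
          (fun p : G × G => (Abelianization.of p.1, Abelianization.of p.2)) x ∈
        LinearMap.ker (barD2 (Abelianization G))),
      δ (Submodule.Quotient.mk ⟨x, hx⟩) =
        Submodule.Quotient.mk
          ⟨Finsupp.mapDomain
              (fun p : G × G => (Abelianization.of p.1, Abelianization.of p.2)) x, hy⟩) :
    (⊤ : Subgroup G).lowerCentralSeries 1 = (⊤ : Subgroup G).lowerCentralSeries 2 ↔ Function.Surjective δ := by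
  constructor
  · intro h12 y
    obtain ⟨⟨z, hz⟩, rfl⟩ := Submodule.Quotient.mk_surjective _ y
    obtain ⟨x, hx, hr⟩ := lift_cycle h12 z hz
    have hy : Finsupp.mapDomain
        (fun p : G × G => (Abelianization.of p.1, Abelianization.of p.2)) x ∈
        LinearMap.ker (barD2 (Abelianization G)) := by
      rw [← piTwo_apply]; exact piTwo_mem_ker hx
    refine ⟨Submodule.Quotient.mk ⟨x, hx⟩, ?_⟩
    rw [hδ x hx hy]; refine (Submodule.Quotient.eq _).mpr ?_; rw [Submodule.mem_comap]
    simpa [piTwo_apply] using hr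
  · exact surj_imp_lcs_eq δ hδ
end

section
/- Let n ≥ 3 and let H be either the quaternion group Q₈ of order 8 or the dihedral group D₈ of order 8. Then there is no surjective group homomorphism from B_n(ℝP²) onto H. -/
open FreeGroup in
/-- Relators of Van Buskirk's presentation of the braid group of the projective plane,
with 0-indexed generators: σ₀,…,σ_{n-2} (`Sum.inl`) and ρ₀,…,ρ_{n-1} (`Sum.inr`). -/
def vanBuskirkRels (n : ℕ) : Set (FreeGroup (Sum (Fin (n-1)) (Fin n))) :=
  {w | (∃ (i j : Fin (n-1)), ((i:ℕ)+2 ≤ (j:ℕ) ∨ (j:ℕ)+2 ≤ (i:ℕ)) ∧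
        w = of (Sum.inl i) * of (Sum.inl j) * (of (Sum.inl i))⁻¹ * (of (Sum.inl j))⁻¹)
    ∨ (∃ (i : ℕ) (h : i < n-1) (h' : i+1 < n-1),
        w = of (Sum.inl ⟨i,h⟩) * of (Sum.inl ⟨i+1,h'⟩) * of (Sum.inl ⟨i,h⟩) *
            (of (Sum.inl ⟨i+1,h'⟩))⁻¹ * (of (Sum.inl ⟨i,h⟩))⁻¹ * (of (Sum.inl ⟨i+1,h'⟩))⁻¹)
    ∨ (∃ (i : Fin (n-1)) (j : Fin n), (j:ℕ) ≠ (i:ℕ) ∧ (j:ℕ) ≠ (i:ℕ)+1 ∧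
        w = of (Sum.inl i) * of (Sum.inr j) * (of (Sum.inl i))⁻¹ * (of (Sum.inr j))⁻¹)
    ∨ (∃ (i : ℕ) (h : i < n-1) (hi : i < n) (hi' : i+1 < n),
        w = of (Sum.inl ⟨i,h⟩) * of (Sum.inr ⟨i+1,hi'⟩) * of (Sum.inl ⟨i,h⟩) *
            (of (Sum.inr ⟨i,hi⟩))⁻¹)
    ∨ (∃ (i : ℕ) (h : i < n-1) (hi : i < n) (hi' : i+1 < n),
        w = (of (Sum.inr ⟨i+1,hi'⟩))⁻¹ * (of (Sum.inr ⟨i,hi⟩))⁻¹ * of (Sum.inr ⟨i+1,hi'⟩) *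
            of (Sum.inr ⟨i,hi⟩) * ((of (Sum.inl ⟨i,h⟩))⁻¹)^2)
    ∨ (∃ (h : 0 < n),
        w = (of (Sum.inr ⟨0,h⟩))^2 *
            (((List.finRange (n-1)).map (fun i => of (Sum.inl i))).prod *
             (((List.finRange (n-1)).reverse.map (fun i => of (Sum.inl i))).prod))⁻¹)}

/-- The braid group `B_n(ℝP²)` of the projective plane, via Van Buskirk's presentation. -/
abbrev BnRP2 (n : ℕ) : Type := PresentedGroup (vanBuskirkRels n)

/-- The generator σ_i (0-indexed). -/
def BnRP2.sigma (n : ℕ) (i : Fin (n-1)) : BnRP2 n := PresentedGroup.of (Sum.inl i)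

/-- The generator ρ_j (0-indexed). -/
def BnRP2.rho (n : ℕ) (j : Fin n) : BnRP2 n := PresentedGroup.of (Sum.inr j)

/-- Relators are trivial in a presented group. -/
lemma BnRP2.relone {α : Type*} {rels : Set (FreeGroup α)} {w : FreeGroup α} (h : w ∈ rels) :
    PresentedGroup.mk rels w = 1 :=
  (QuotientGroup.eq_one_iff _).mpr (Subgroup.subset_normalClosure h)

/-- Transfer of the three key properties along a group isomorphism. -/
lemma BnRP2.transfer {H G : Type*} [Group H] [Group G] (e : H ≃* G)
    (hB : ∀ x g : G, g * (x*x) = (x*x) * g)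
    (hC : ∀ x y : G, x*y = y*x →
      (∀ g, g*x = x*g) ∨ (∀ g, g*y = y*g) ∨ (∀ g, g*(x*y⁻¹) = (x*y⁻¹)*g))
    (hD : ∃ u v : G, ¬(∀ g, g*u = u*g) ∧ ¬(∀ g, g*v = v*g) ∧ ¬(∀ g, g*(u*v⁻¹) = (u*v⁻¹)*g)) :
    (∀ x : H, x*x ∈ Subgroup.center H) ∧
    (∀ x y : H, x*y = y*x → x ∈ Subgroup.center H ∨ y ∈ Subgroup.center H ∨
      x*y⁻¹ ∈ Subgroup.center H) ∧
    (∃ u v : H, u ∉ Subgroup.center H ∧ v ∉ Subgroup.center H ∧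
      u*v⁻¹ ∉ Subgroup.center H) := by
  have hcent : ∀ x : H, x ∈ Subgroup.center H ↔ ∀ g : G, g * e x = e x * g := by
    intro x
    rw [Subgroup.mem_center_iff]
    constructor
    · intro h g
      have h1 := congrArg e (h (e.symm g))
      simpa only [map_mul, MulEquiv.apply_symm_apply] using h1
    · intro h g
      apply e.injective
      simpa only [map_mul] using h (e g)
  refine ⟨?_, ?_, ?_⟩
  · intro x
    rw [hcent]
    intro g
    rw [map_mul]
    exact hB (e x) g
  · intro x y hxy
    have hxy' : e x * e y = e y * e x := by rw [← map_mul, ← map_mul, hxy]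
    rcases hC _ _ hxy' with h | h | h
    · left; rw [hcent]; exact h
    · right; left; rw [hcent]; exact h
    · right; right; rw [hcent]; intro g; rw [map_mul, map_inv]; exact h g
  · obtain ⟨u, v, hu, hv, huv⟩ := hD
    refine ⟨e.symm u, e.symm v, ?_, ?_, ?_⟩
    · rw [hcent]; simpa only [MulEquiv.apply_symm_apply] using hu
    · rw [hcent]; simpa only [MulEquiv.apply_symm_apply] using hv
    · rw [hcent]; simpa only [map_mul, map_inv, MulEquiv.apply_symm_apply] using huv

/-- The main abstract argument: no surjection from `BnRP2 n` onto a group with these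
three properties (satisfied by the nonabelian groups of order 8). -/
lemma BnRP2.main_aux {H : Type} [Group H]
    (hB : ∀ x : H, x*x ∈ Subgroup.center H)
    (hC : ∀ x y : H, x*y = y*x → x ∈ Subgroup.center H ∨ y ∈ Subgroup.center H ∨
      x*y⁻¹ ∈ Subgroup.center H)
    (hD : ∃ u v : H, u ∉ Subgroup.center H ∧ v ∉ Subgroup.center H ∧
      u*v⁻¹ ∉ Subgroup.center H)
    (n : ℕ) (hn : 3 ≤ n) :
    ¬ ∃ φ : BnRP2 n →* H, Function.Surjective φ := by
  rintro ⟨φ, hφ⟩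
  set π : H →* H ⧸ Subgroup.center H := QuotientGroup.mk' (Subgroup.center H) with hπdef
  have hπ1 : ∀ x : H, π x = 1 ↔ x ∈ Subgroup.center H := by
    intro x; exact QuotientGroup.eq_one_iff x
  have hsq : ∀ x : H, π x * π x = 1 := by
    intro x; rw [← map_mul]; exact (hπ1 _).mpr (hB x)
  have hinv : ∀ x : H, (π x)⁻¹ = π x := fun x => inv_eq_of_mul_eq_one_right (hsq x)
  have hcomm : ∀ x y : H, π x * π y = π y * π x := by
    intro x y
    have h1 : (π x * π y) * (π x * π y) = 1 := by
      rw [← map_mul]; exact hsq (x*y)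
    have h2 : (π x * π y)⁻¹ = π x * π y := inv_eq_of_mul_eq_one_right h1
    rw [mul_inv_rev, hinv, hinv] at h2
    exact h2.symm
  -- generator images
  set g : Sum (Fin (n-1)) (Fin n) → H :=
    fun x => φ (PresentedGroup.mk (vanBuskirkRels n) (FreeGroup.of x)) with hgdef
  have hrel : ∀ w ∈ vanBuskirkRels n, φ (PresentedGroup.mk (vanBuskirkRels n) w) = 1 := by
    intro w hw; rw [BnRP2.relone hw, map_one]
  -- braid relations
  have hbraid : ∀ (i : ℕ) (h : i < n-1) (h' : i+1 < n-1),
      g (Sum.inl ⟨i,h⟩) * g (Sum.inl ⟨i+1,h'⟩) * g (Sum.inl ⟨i,h⟩)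
        = g (Sum.inl ⟨i+1,h'⟩) * g (Sum.inl ⟨i,h⟩) * g (Sum.inl ⟨i+1,h'⟩) := by
    intro i h h'
    have hw := hrel _ (Or.inr (Or.inl ⟨i, h, h', rfl⟩))
    simp only [map_mul, map_inv] at hw
    set A := g (Sum.inl ⟨i,h⟩) with hA
    set B := g (Sum.inl ⟨i+1,h'⟩) with hB'
    calc A * B * A = (A * B * A * B⁻¹ * A⁻¹ * B⁻¹) * (B * A * B) := by group
    _ = B * A * B := by rw [hw, one_mul]
  -- σ_i ρ_{i+1} σ_i = ρ_i
  have hsr : ∀ (i : ℕ) (h : i < n-1) (hi : i < n) (hi' : i+1 < n),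
      g (Sum.inl ⟨i,h⟩) * g (Sum.inr ⟨i+1,hi'⟩) * g (Sum.inl ⟨i,h⟩) = g (Sum.inr ⟨i,hi⟩) := by
    intro i h hi hi'
    have hw := hrel _ (Or.inr (Or.inr (Or.inr (Or.inl ⟨i, h, hi, hi', rfl⟩))))
    simp only [map_mul, map_inv] at hw
    set A := g (Sum.inl ⟨i,h⟩)
    set R' := g (Sum.inr ⟨i+1,hi'⟩)
    set R := g (Sum.inr ⟨i,hi⟩)
    calc A * R' * A = (A * R' * A * R⁻¹) * R := by group
    _ = R := by rw [hw, one_mul]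
  -- σ_1 commutes with ρ_0
  have h1n : (1:ℕ) < n-1 := by omega
  have h0n : (0:ℕ) < n-1 := by omega
  have h0 : (0:ℕ) < n := by omega
  have hcom10 : g (Sum.inl ⟨1,h1n⟩) * g (Sum.inr ⟨0,h0⟩)
      = g (Sum.inr ⟨0,h0⟩) * g (Sum.inl ⟨1,h1n⟩) := by
    have hmem : FreeGroup.of (Sum.inl (⟨1,h1n⟩ : Fin (n-1))) *
        FreeGroup.of (Sum.inr (⟨0,h0⟩ : Fin n)) *
        (FreeGroup.of (Sum.inl (⟨1,h1n⟩ : Fin (n-1))))⁻¹ *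
        (FreeGroup.of (Sum.inr (⟨0,h0⟩ : Fin n)))⁻¹ ∈ vanBuskirkRels n := by
      refine Or.inr (Or.inr (Or.inl ⟨⟨1,h1n⟩, ⟨0,h0⟩, ?_, ?_, rfl⟩)) <;> simp
    have hw := hrel _ hmem
    simp only [map_mul, map_inv] at hw
    set S := g (Sum.inl ⟨1,h1n⟩)
    set R := g (Sum.inr ⟨0,h0⟩)
    calc S * R = (S * R * S⁻¹ * R⁻¹) * (R * S) := by group
    _ = R * S := by rw [hw, one_mul]
  -- all σ's agree mod center
  set a : H ⧸ Subgroup.center H := π (g (Sum.inl ⟨0,h0n⟩)) with hadef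
  set b : H ⧸ Subgroup.center H := π (g (Sum.inr ⟨0,h0⟩)) with hbdef
  have hAll : ∀ (i : ℕ) (h : i < n-1), π (g (Sum.inl ⟨i,h⟩)) = a := by
    intro i
    induction i with
    | zero => intro h; rfl
    | succ k ih =>
      intro h
      have hk : k < n-1 := by omega
      have hb := congrArg π (hbraid k hk h)
      simp only [map_mul] at hb
      set p := π (g (Sum.inl ⟨k,hk⟩)) with hpdef
      set q := π (g (Sum.inl ⟨k+1,h⟩)) with hqdef
      have hl : p * q * p = q := by
        rw [mul_assoc, hpdef, hqdef, hcomm, ← hpdef, ← hqdef, ← mul_assoc, hsq, one_mul]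
      have hr : q * p * q = p := by
        rw [mul_assoc, hpdef, hqdef, hcomm, ← hpdef, ← hqdef, ← mul_assoc, hsq, one_mul]
      rw [hl, hr] at hb
      rw [hb]
      exact ih hk
  have hBall : ∀ (j : ℕ) (h : j < n), π (g (Sum.inr ⟨j,h⟩)) = b := by
    intro j
    induction j with
    | zero => intro h; rfl
    | succ k ih =>
      intro h
      have hk1 : k < n-1 := by omega
      have hk : k < n := by omega
      have hb := congrArg π (hsr k hk1 hk h)
      simp only [map_mul] at hb
      set p := π (g (Sum.inl ⟨k,hk1⟩)) with hpdef
      set q := π (g (Sum.inr ⟨k+1,h⟩)) with hqdef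
      have hl : p * q * p = q := by
        rw [mul_assoc, hpdef, hqdef, hcomm, ← hpdef, ← hqdef, ← mul_assoc, hsq, one_mul]
      rw [hl] at hb
      rw [hb]
      exact ih hk
  -- pick c
  have hmain : ∃ c : H ⧸ Subgroup.center H, c * c = 1 ∧
      ∀ x : Sum (Fin (n-1)) (Fin n), π (g x) = 1 ∨ π (g x) = c := by
    rcases hC _ _ hcom10 with hc | hc | hc
    · -- σ₁ central: a = 1, take c = b
      have ha1 : a = 1 := by rw [← hAll 1 h1n]; exact (hπ1 _).mpr hc
      refine ⟨b, hsq _, ?_⟩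
      rintro (⟨i, hi⟩ | ⟨j, hj⟩)
      · left; rw [hAll i hi, ha1]
      · right; exact hBall j hj
    · -- ρ₀ central: b = 1, take c = a
      have hb1 : b = 1 := (hπ1 _).mpr hc
      refine ⟨a, hsq _, ?_⟩
      rintro (⟨i, hi⟩ | ⟨j, hj⟩)
      · right; exact hAll i hi
      · left; rw [hBall j hj, hb1]
    · -- a = b, take c = a
      have hab : a = b := by
        have h1 : π (g (Sum.inl ⟨1,h1n⟩) * (g (Sum.inr ⟨0,h0⟩))⁻¹) = 1 := (hπ1 _).mpr hc
        rw [map_mul, map_inv] at h1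
        have := mul_inv_eq_one.mp h1
        rw [← hAll 1 h1n, this]
      refine ⟨a, hsq _, ?_⟩
      rintro (⟨i, hi⟩ | ⟨j, hj⟩)
      · right; exact hAll i hi
      · right; rw [hBall j hj, hab]
  obtain ⟨c, hc2, hall⟩ := hmain
  -- every element of H maps into zpowers c mod center
  have hgen : ∀ w : BnRP2 n, π (φ w) ∈ Subgroup.zpowers c := by
    intro w
    have := PresentedGroup.generated_by (vanBuskirkRels n)
      (Subgroup.comap (π.comp φ) (Subgroup.zpowers c)) ?_ w
    · simpa only [Subgroup.mem_comap, MonoidHom.comp_apply] using this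
    · intro j
      have hj := hall j
      simp only [Subgroup.mem_comap, MonoidHom.comp_apply]
      rcases hj with hj | hj
      · show π (g j) ∈ _
        rw [hj]; exact one_mem _
      · show π (g j) ∈ _
        rw [hj]; exact Subgroup.mem_zpowers c
  have hzp : ∀ k : ℤ, c ^ k = 1 ∨ c ^ k = c := by
    have hc2' : c ^ (2:ℤ) = 1 := by rw [zpow_two]; exact hc2
    intro k
    rcases Int.even_or_odd k with ⟨m, hm⟩ | ⟨m, hm⟩
    · left
      rw [hm]
      have : m + m = 2 * m := by ring
      rw [this, zpow_mul, hc2', one_zpow]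
    · right
      rw [hm, zpow_add, zpow_mul, hc2', one_zpow, one_mul, zpow_one]
  have hHc : ∀ h : H, π h = 1 ∨ π h = c := by
    intro h
    obtain ⟨w, rfl⟩ := hφ h
    obtain ⟨k, hk⟩ := Subgroup.mem_zpowers_iff.mp (hgen w)
    rcases hzp k with h1 | h1
    · left; rw [← hk, h1]
    · right; rw [← hk, h1]
  obtain ⟨u, v, hu, hv, huv⟩ := hD
  have hu' : π u = c := by
    rcases hHc u with h1 | h1
    · exact absurd ((hπ1 u).mp h1) hu
    · exact h1
  have hv' : π v = c := by
    rcases hHc v with h1 | h1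
    · exact absurd ((hπ1 v).mp h1) hv
    · exact h1
  apply huv
  apply (hπ1 _).mp
  rw [map_mul, map_inv, hu', hv', mul_inv_cancel]

/-- For `n ≥ 3`, there is no surjective homomorphism from `B_n(ℝP²)` onto the quaternion
group `Q₈` or the dihedral group `D₈` of order 8. -/
theorem no_surjection_BnRP2_onto_Q8_or_D8 (n : ℕ) (hn : 3 ≤ n) (H : Type) [Group H]
    (hH : Nonempty (H ≃* QuaternionGroup 2) ∨ Nonempty (H ≃* DihedralGroup 4)) :
    ¬ ∃ φ : BnRP2 n →* H, Function.Surjective φ := by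
  rcases hH with ⟨⟨e⟩⟩ | ⟨⟨e⟩⟩
  · obtain ⟨hB, hC, hD⟩ := BnRP2.transfer e (by decide) (by decide) (by decide)
    exact BnRP2.main_aux hB hC hD n hn
  · obtain ⟨hB, hC, hD⟩ := BnRP2.transfer e (by decide) (by decide) (by decide)
    exact BnRP2.main_aux hB hC hD n hn
end

section
/- For all n ≥ 3 the lower central series of B_n(ℝP²) is constant from the commutator subgroup onwards: Γ_m(B_n(ℝP²)) = Γ₂(B_n(ℝP²)) for all m ≥ 2. -/
open scoped commutatorElement

lemma braid_eq_of_central_comm {Q : Type*} [Group Q]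
    (hc : ∀ x y z : Q, Commute ⁅x, y⁆ z) {a b : Q}
    (h : a * b * a = b * a * b) : a = b := by
  have e1 : a * b * a = ⁅a, b⁆ * b * a * a := by group
  have e2 : b * a * b = b * ⁅a, b⁆ * b * a := by group
  have e3 : b * ⁅a, b⁆ = ⁅a, b⁆ * b := ((hc a b b).symm)
  rw [e1, e2, e3] at h
  exact mul_left_cancel (mul_right_cancel h)

/-- Any quotient of `B_n(ℝP²)` (for `n ≥ 3`) in which all commutators are central
is abelian. -/
lemma BnRP2_quotient_comm (n : ℕ) (hn : 3 ≤ n) {Q : Type*} [Group Q]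
    (φ : BnRP2 n →* Q) (hsurj : Function.Surjective φ)
    (hc : ∀ x y z : Q, Commute ⁅x, y⁆ z) (a b : Q) : a * b = b * a := by
  set ψ : FreeGroup (Sum (Fin (n-1)) (Fin n)) →* Q :=
    φ.comp (PresentedGroup.mk (vanBuskirkRels n)) with hψ
  have hrel : ∀ w ∈ vanBuskirkRels n, ψ w = 1 := by
    intro w hw
    have h1 : PresentedGroup.mk (vanBuskirkRels n) w = 1 :=
      (QuotientGroup.eq_one_iff w).mpr (Subgroup.subset_normalClosure hw)
    simp [hψ, h1]
  set S : Fin (n-1) → Q := fun i => ψ (FreeGroup.of (Sum.inl i)) with hS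
  set R : Fin n → Q := fun j => ψ (FreeGroup.of (Sum.inr j)) with hR
  -- braid relations
  have hbraid : ∀ (i : ℕ) (h : i < n-1) (h' : i+1 < n-1),
      S ⟨i,h⟩ * S ⟨i+1,h'⟩ * S ⟨i,h⟩ = S ⟨i+1,h'⟩ * S ⟨i,h⟩ * S ⟨i+1,h'⟩ := by
    intro i h h'
    have hw := hrel _ (Or.inr (Or.inl ⟨i, h, h', rfl⟩))
    simp only [map_mul, map_inv] at hw
    have key : S ⟨i,h⟩ * S ⟨i+1,h'⟩ * S ⟨i,h⟩ =
        (S ⟨i,h⟩ * S ⟨i+1,h'⟩ * S ⟨i,h⟩ * (S ⟨i+1,h'⟩)⁻¹ * (S ⟨i,h⟩)⁻¹ * (S ⟨i+1,h'⟩)⁻¹) *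
        (S ⟨i+1,h'⟩ * S ⟨i,h⟩ * S ⟨i+1,h'⟩) := by group
    rw [key, hw, one_mul]
  -- σᵢ all equal
  have h0n : 0 < n - 1 := by omega
  have h1n : 1 < n - 1 := by omega
  set σ : Q := S ⟨0, h0n⟩ with hσ
  have hSeq : ∀ (i : ℕ) (h : i < n-1), S ⟨i,h⟩ = σ := by
    intro i
    induction i with
    | zero => intro h; rfl
    | succ k ih =>
      intro h
      have hk : k < n - 1 := by omega
      have := braid_eq_of_central_comm hc (hbraid k hk h)
      rw [← this]; exact ih hk
  -- relation 3 instance: σ₁ commutes with ρ₀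
  have h0 : (0:ℕ) < n := by omega
  have hcomm0 : Commute σ (R ⟨0,h0⟩) := by
    have hw := hrel _ (Or.inr (Or.inr (Or.inl
      ⟨⟨1,h1n⟩, ⟨0,h0⟩, by norm_num, by norm_num, rfl⟩)))
    simp only [map_mul, map_inv] at hw
    have : ⁅S ⟨1,h1n⟩, R ⟨0,h0⟩⁆ = 1 := by rw [commutatorElement_def]; exact hw
    have hc1 : Commute (S ⟨1,h1n⟩) (R ⟨0,h0⟩) := commutatorElement_eq_one_iff_commute.mp this
    rwa [hSeq 1 h1n] at hc1
  -- relation 4: σ * ρ_{i+1} * σ = ρ_i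
  have hrel4 : ∀ (i : ℕ) (hi : i < n) (hi' : i+1 < n),
      σ * R ⟨i+1,hi'⟩ * σ = R ⟨i,hi⟩ := by
    intro i hi hi'
    have h : i < n - 1 := by omega
    have hw := hrel _ (Or.inr (Or.inr (Or.inr (Or.inl ⟨i, h, hi, hi', rfl⟩))))
    simp only [map_mul, map_inv] at hw
    have key : S ⟨i,h⟩ * R ⟨i+1,hi'⟩ * S ⟨i,h⟩ =
        (S ⟨i,h⟩ * R ⟨i+1,hi'⟩ * S ⟨i,h⟩ * (R ⟨i,hi⟩)⁻¹) * R ⟨i,hi⟩ := by group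
    rw [← hSeq i h]
    rw [key, hw, one_mul]
  -- σ commutes with every ρ_j
  have hcommR : ∀ (j : ℕ) (hj : j < n), Commute σ (R ⟨j,hj⟩) := by
    intro j
    induction j with
    | zero => intro hj; exact hcomm0
    | succ k ih =>
      intro hj
      have hk : k < n := by omega
      have hform : R ⟨k+1,hj⟩ = σ⁻¹ * R ⟨k,hk⟩ * σ⁻¹ := by
        have := hrel4 k hk hj
        rw [← this]; group
      rw [hform]
      exact ((Commute.refl σ).inv_right.mul_right (ih hk)).mul_right
        (Commute.refl σ).inv_right
  -- explicit form of ρ_j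
  have hRform : ∀ (j : ℕ) (hj : j < n), R ⟨j,hj⟩ = R ⟨0,h0⟩ * (σ⁻¹*σ⁻¹)^j := by
    intro j
    induction j with
    | zero => intro hj; simp
    | succ k ih =>
      intro hj
      have hk : k < n := by omega
      have hform : R ⟨k+1,hj⟩ = σ⁻¹ * R ⟨k,hk⟩ * σ⁻¹ := by
        have := hrel4 k hk hj
        rw [← this]; group
      have hcr : σ⁻¹ * R ⟨k,hk⟩ = R ⟨k,hk⟩ * σ⁻¹ := ((hcommR k hk).inv_left.eq)
      rw [hform, hcr, ih hk, pow_succ]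
      group
  -- all generators commute
  have hgen : ∀ x y : Sum (Fin (n-1)) (Fin n),
      Commute (ψ (FreeGroup.of x)) (ψ (FreeGroup.of y)) := by
    have hSall : ∀ i : Fin (n-1), S i = σ := fun i => by
      have := hSeq i.1 i.2; rwa [Fin.eta] at this
    have hRall : ∀ j : Fin n, Commute σ (R j) := fun j => by
      have := hcommR j.1 j.2; rwa [Fin.eta] at this
    have hRR : ∀ j k : Fin n, Commute (R j) (R k) := by
      intro j k
      have hj := hRform j.1 j.2
      have hk := hRform k.1 k.2
      rw [Fin.eta] at hj hk
      rw [hj, hk]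
      have ht : Commute (R ⟨0,h0⟩) (σ⁻¹*σ⁻¹) :=
        (hcomm0.symm.inv_right).mul_right (hcomm0.symm.inv_right)
      exact ((Commute.refl _).mul_right (ht.pow_right _)).mul_left
        ((ht.symm.pow_left _).mul_right ((Commute.refl _).pow_pow _ _))
    rintro (i | j) (i' | j')
    · show Commute (S i) (S i'); rw [hSall i, hSall i']
    · show Commute (S i) (R j'); rw [hSall i]; exact hRall j'
    · show Commute (R j) (S i'); rw [hSall i']; exact (hRall j).symm
    · exact hRR j j'
  -- closure argument
  set T : Set Q := Set.range (fun x => ψ (FreeGroup.of x)) with hT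
  have hTcomm : ∀ s ∈ T, ∀ t ∈ T, Commute s t := by
    rintro s ⟨x, rfl⟩ t ⟨y, rfl⟩; exact hgen x y
  have hclosure : Subgroup.closure T = ⊤ := by
    have : T = φ '' (Set.range (PresentedGroup.of : _ → BnRP2 n)) := by
      rw [hT, ← Set.range_comp]; rfl
    rw [this, ← MonoidHom.map_closure, PresentedGroup.closure_range_of,
      Subgroup.map_top_of_surjective φ hsurj]
  have h1 : Subgroup.closure T ≤ Subgroup.centralizer T :=
    (Subgroup.closure_le _).mpr (fun t ht => Subgroup.mem_centralizer_iff.mpr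
      (fun s hs => (hTcomm s hs t ht).eq))
  have h2 : Subgroup.closure T ≤
      Subgroup.centralizer ((Subgroup.closure T : Subgroup Q) : Set Q) :=
    (Subgroup.closure_le _).mpr (fun t ht => Subgroup.mem_centralizer_iff.mpr
      (fun g hg => (Subgroup.mem_centralizer_iff.mp (h1 hg) t ht).symm))
  have ha : a ∈ Subgroup.closure T := by rw [hclosure]; trivial
  have hb : b ∈ Subgroup.closure T := by rw [hclosure]; trivial
  exact Subgroup.mem_centralizer_iff.mp (h2 hb) a ha

/-- For all `n ≥ 3`, the lower central series of `B_n(ℝP²)` is constant from the commutator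
subgroup onwards: `Γ_m = Γ_2` for all `m ≥ 2`. (Here `Γ_m(G) = Subgroup.lowerCentralSeries (⊤ : Subgroup G) (m-1)`.) -/
theorem lowerCentralSeries_BnRP2_constant (n : ℕ) (hn : 3 ≤ n) :
    ∀ m : ℕ, 2 ≤ m →
      Subgroup.lowerCentralSeries (⊤ : Subgroup (BnRP2 n)) (m - 1) =
        Subgroup.lowerCentralSeries (⊤ : Subgroup (BnRP2 n)) 1 := by
  set G := BnRP2 n with hG
  set N : Subgroup G := Subgroup.lowerCentralSeries (⊤ : Subgroup G) 2 with hN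
  haveI : N.Normal := Subgroup.lowerCentralSeries_normal ⊤ 2
  set π : G →* G ⧸ N := QuotientGroup.mk' N with hπ
  have hsurj : Function.Surjective π := QuotientGroup.mk'_surjective N
  have hc : ∀ x y z : G ⧸ N, Commute ⁅x, y⁆ z := by
    intro x y z
    obtain ⟨a, rfl⟩ := hsurj x
    obtain ⟨b, rfl⟩ := hsurj y
    obtain ⟨c, rfl⟩ := hsurj z
    have hmem : ⁅⁅a,b⁆,c⁆ ∈ N := by
      have h1 : ⁅a,b⁆ ∈ Subgroup.lowerCentralSeries (⊤ : Subgroup G) 1 := by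
        rw [Subgroup.top_lowerCentralSeries_one, commutator_def]
        exact Subgroup.commutator_mem_commutator (Subgroup.mem_top a) (Subgroup.mem_top b)
      have h2 : Subgroup.lowerCentralSeries (⊤ : Subgroup G) 2 = ⁅Subgroup.lowerCentralSeries (⊤ : Subgroup G) 1, ⊤⁆ := rfl
      rw [hN, h2]
      exact Subgroup.commutator_mem_commutator h1 (Subgroup.mem_top c)
    have : π ⁅⁅a,b⁆,c⁆ = 1 := (QuotientGroup.eq_one_iff _).mpr hmem
    rw [map_commutatorElement, map_commutatorElement] at this
    exact commutatorElement_eq_one_iff_commute.mp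
      (by rw [← map_commutatorElement, ← map_commutatorElement] at this ⊢; exact this)
  have hQcomm : ∀ a b : G ⧸ N, a * b = b * a :=
    BnRP2_quotient_comm n hn π hsurj hc
  have key : Subgroup.lowerCentralSeries (⊤ : Subgroup G) 1 ≤ N := by
    rw [Subgroup.top_lowerCentralSeries_one, commutator_def]
    refine Subgroup.commutator_le.mpr (fun x _ y _ => ?_)
    have : π ⁅x,y⁆ = 1 := by
      rw [map_commutatorElement]
      exact commutatorElement_eq_one_iff_commute.mpr (hQcomm (π x) (π y))
    exact (QuotientGroup.eq_one_iff _).mp this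
  have key2 : Subgroup.lowerCentralSeries (⊤ : Subgroup G) 2 = Subgroup.lowerCentralSeries (⊤ : Subgroup G) 1 :=
    le_antisymm (Subgroup.lowerCentralSeries_antitone ⊤ (by norm_num)) key
  have stable : ∀ k : ℕ, 1 ≤ k → Subgroup.lowerCentralSeries (⊤ : Subgroup G) k = Subgroup.lowerCentralSeries (⊤ : Subgroup G) 1 := by
    intro k hk
    induction k with
    | zero => omega
    | succ j ih =>
      rcases Nat.eq_or_lt_of_le hk with h | h
      · rw [← h]
      · have hj : 1 ≤ j := by omega
        have h2 : Subgroup.lowerCentralSeries (⊤ : Subgroup G) (j+1) = ⁅Subgroup.lowerCentralSeries (⊤ : Subgroup G) j, ⊤⁆ := rfl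
        rw [h2, ih hj]
        exact key2
  intro m hm
  exact stable (m-1) (by omega)
end

section
/- Let n ≥ 5 and let H be a normal subgroup of B_n(ℝP²) contained in the commutator subgroup such that (B_n(ℝP²))^{(1)}/H is abelian. Then H = (B_n(ℝP²))^{(1)}. In particular, (B_n(ℝP²))^{(2)} = (B_n(ℝP²))^{(1)}, i.e., the commutator subgroup of B_n(ℝP²) is perfect. -/
open scoped commutatorElement

namespace BnRP2

lemma mul_inv_mem_commutator' {G : Type*} [Group G] {g x y : G} (h : x * g = g * y) :
    x * y⁻¹ ∈ commutator G := by
  have hxy : x * y⁻¹ = ⁅g, y⁆ := by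
    rw [commutatorElement_def, ← h, mul_inv_cancel_right]
  rw [hxy, _root_.commutator_def]
  exact Subgroup.commutator_mem_commutator (Subgroup.mem_top _) (Subgroup.mem_top _)

variable (n : ℕ)

lemma mk_rel_eq_one {w : FreeGroup (Sum (Fin (n-1)) (Fin n))} (hw : w ∈ vanBuskirkRels n) :
    (QuotientGroup.mk' (Subgroup.normalClosure (vanBuskirkRels n)) w : BnRP2 n) = 1 :=
  (QuotientGroup.eq_one_iff w).mpr (Subgroup.subset_normalClosure hw)

lemma mk'_of (x : Sum (Fin (n-1)) (Fin n)) :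
    QuotientGroup.mk' (Subgroup.normalClosure (vanBuskirkRels n)) (FreeGroup.of x)
      = PresentedGroup.of (rels := vanBuskirkRels n) x := rfl

lemma braid_rel (i : ℕ) (h : i < n-1) (h' : i+1 < n-1) :
    sigma n ⟨i,h⟩ * sigma n ⟨i+1,h'⟩ * sigma n ⟨i,h⟩
      = sigma n ⟨i+1,h'⟩ * sigma n ⟨i,h⟩ * sigma n ⟨i+1,h'⟩ := by
  have h1 := mk_rel_eq_one n (w := FreeGroup.of (Sum.inl ⟨i,h⟩) * FreeGroup.of (Sum.inl ⟨i+1,h'⟩) *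
      FreeGroup.of (Sum.inl ⟨i,h⟩) * (FreeGroup.of (Sum.inl ⟨i+1,h'⟩))⁻¹ *
      (FreeGroup.of (Sum.inl ⟨i,h⟩))⁻¹ * (FreeGroup.of (Sum.inl ⟨i+1,h'⟩))⁻¹)
    (Or.inr (Or.inl ⟨i, h, h', rfl⟩))
  simp only [map_mul, map_inv, mk'_of] at h1
  unfold BnRP2.sigma
  set A := PresentedGroup.of (rels := vanBuskirkRels n) (Sum.inl ⟨i,h⟩)
  set B := PresentedGroup.of (rels := vanBuskirkRels n) (Sum.inl ⟨i+1,h'⟩)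
  calc A*B*A = (A*B*A*B⁻¹*A⁻¹*B⁻¹)*(B*A*B) := by group
  _ = B*A*B := by erw [h1, one_mul]

lemma far_rel (i j : Fin (n-1)) (hij : (i:ℕ)+2 ≤ (j:ℕ)) :
    sigma n i * sigma n j = sigma n j * sigma n i := by
  have h1 := mk_rel_eq_one n (w := FreeGroup.of (Sum.inl i) * FreeGroup.of (Sum.inl j) *
      (FreeGroup.of (Sum.inl i))⁻¹ * (FreeGroup.of (Sum.inl j))⁻¹)
    (Or.inl ⟨i, j, Or.inl hij, rfl⟩)
  simp only [map_mul, map_inv, mk'_of] at h1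
  unfold BnRP2.sigma
  set A := PresentedGroup.of (rels := vanBuskirkRels n) (Sum.inl i)
  set B := PresentedGroup.of (rels := vanBuskirkRels n) (Sum.inl j)
  calc A*B = (A*B*A⁻¹*B⁻¹)*(B*A) := by group
  _ = B*A := by erw [h1, one_mul]

lemma sr_rel (i : Fin (n-1)) (j : Fin n) (h1 : (j:ℕ) ≠ (i:ℕ)) (h2 : (j:ℕ) ≠ (i:ℕ)+1) :
    sigma n i * rho n j = rho n j * sigma n i := by
  have hh := mk_rel_eq_one n (w := FreeGroup.of (Sum.inl i) * FreeGroup.of (Sum.inr j) *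
      (FreeGroup.of (Sum.inl i))⁻¹ * (FreeGroup.of (Sum.inr j))⁻¹)
    (Or.inr (Or.inr (Or.inl ⟨i, j, h1, h2, rfl⟩)))
  simp only [map_mul, map_inv, mk'_of] at hh
  unfold BnRP2.sigma BnRP2.rho
  set A := PresentedGroup.of (rels := vanBuskirkRels n) (Sum.inl i)
  set B := PresentedGroup.of (rels := vanBuskirkRels n) (Sum.inr j)
  calc A*B = (A*B*A⁻¹*B⁻¹)*(B*A) := by group
  _ = B*A := by erw [hh, one_mul]

lemma rho_rel (i : ℕ) (h : i < n-1) (hi : i < n) (hi' : i+1 < n) :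
    rho n ⟨i+1,hi'⟩ = (sigma n ⟨i,h⟩)⁻¹ * rho n ⟨i,hi⟩ * (sigma n ⟨i,h⟩)⁻¹ := by
  have h1 := mk_rel_eq_one n (w := FreeGroup.of (Sum.inl ⟨i,h⟩) * FreeGroup.of (Sum.inr ⟨i+1,hi'⟩) *
      FreeGroup.of (Sum.inl ⟨i,h⟩) * (FreeGroup.of (Sum.inr ⟨i,hi⟩))⁻¹)
    (Or.inr (Or.inr (Or.inr (Or.inl ⟨i, h, hi, hi', rfl⟩))))
  simp only [map_mul, map_inv, mk'_of] at h1
  unfold BnRP2.sigma BnRP2.rho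
  set A := PresentedGroup.of (rels := vanBuskirkRels n) (Sum.inl ⟨i,h⟩)
  set B := PresentedGroup.of (rels := vanBuskirkRels n) (Sum.inr ⟨i+1,hi'⟩)
  set C := PresentedGroup.of (rels := vanBuskirkRels n) (Sum.inr ⟨i,hi⟩)
  calc B = A⁻¹*(A*B*A*C⁻¹)*C*A⁻¹ := by group
  _ = A⁻¹*C*A⁻¹ := by erw [h1, mul_one]

lemma crho_rel (i : ℕ) (h : i < n-1) (hi : i < n) (hi' : i+1 < n) :
    (rho n ⟨i+1,hi'⟩)⁻¹ * (rho n ⟨i,hi⟩)⁻¹ * rho n ⟨i+1,hi'⟩ * rho n ⟨i,hi⟩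
      = (sigma n ⟨i,h⟩)^2 := by
  have h1 := mk_rel_eq_one n (w := (FreeGroup.of (Sum.inr ⟨i+1,hi'⟩))⁻¹ *
      (FreeGroup.of (Sum.inr ⟨i,hi⟩))⁻¹ * FreeGroup.of (Sum.inr ⟨i+1,hi'⟩) *
      FreeGroup.of (Sum.inr ⟨i,hi⟩) * ((FreeGroup.of (Sum.inl ⟨i,h⟩))⁻¹)^2)
    (Or.inr (Or.inr (Or.inr (Or.inr (Or.inl ⟨i, h, hi, hi', rfl⟩)))))
  simp only [map_mul, map_inv, map_pow, mk'_of] at h1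
  unfold BnRP2.sigma BnRP2.rho
  set A := PresentedGroup.of (rels := vanBuskirkRels n) (Sum.inl ⟨i,h⟩)
  set B := PresentedGroup.of (rels := vanBuskirkRels n) (Sum.inr ⟨i+1,hi'⟩)
  set C := PresentedGroup.of (rels := vanBuskirkRels n) (Sum.inr ⟨i,hi⟩)
  calc B⁻¹*C⁻¹*B*C = (B⁻¹*C⁻¹*B*C*(A⁻¹)^2)*A^2 := by group
  _ = A^2 := by erw [h1, one_mul]

end BnRP2

namespace BnRP2

theorem image_comm {n : ℕ} (hn : 5 ≤ n) {Q : Type*} [Group Q] (f : BnRP2 n →* Q)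
    (hmeta : ∀ a b : BnRP2 n, a ∈ commutator (BnRP2 n) → b ∈ commutator (BnRP2 n) →
      f a * f b = f b * f a) :
    ∀ x y : BnRP2 n, f x * f y = f y * f x := by
  have h4 : 4 ≤ n - 1 := by omega
  -- ℕ-indexed generators
  set S : ℕ → Q := fun i => if h : i < n - 1 then f (sigma n ⟨i, h⟩) else 1 with hSdef
  set R : ℕ → Q := fun j => if h : j < n then f (rho n ⟨j, h⟩) else 1 with hRdef
  have hS : ∀ (i : ℕ) (h : i < n-1), S i = f (sigma n ⟨i,h⟩) := fun i h => dif_pos h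
  have hR : ∀ (j : ℕ) (h : j < n), R j = f (rho n ⟨j,h⟩) := fun j h => dif_pos h
  -- relations in Q
  have qfar : ∀ i j : ℕ, i+2 ≤ j → j < n-1 → S i * S j = S j * S i := by
    intro i j hij hj
    have hi : i < n - 1 := by omega
    rw [hS i hi, hS j hj, ← map_mul, ← map_mul, far_rel n ⟨i,hi⟩ ⟨j,hj⟩ hij]
  have qbraid : ∀ i : ℕ, i+1 < n-1 → S i * S (i+1) * S i = S (i+1) * S i * S (i+1) := by
    intro i h'
    have hi : i < n - 1 := by omega
    rw [hS i hi, hS (i+1) h', ← map_mul, ← map_mul, ← map_mul, ← map_mul,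
      braid_rel n i hi h']
  have qsr : ∀ i j : ℕ, i < n-1 → j < n → j ≠ i → j ≠ i+1 → S i * R j = R j * S i := by
    intro i j hi hj h1 h2
    rw [hS i hi, hR j hj, ← map_mul, ← map_mul, sr_rel n ⟨i,hi⟩ ⟨j,hj⟩ h1 h2]
  have qrho : ∀ i : ℕ, i+1 < n → R (i+1) = (S i)⁻¹ * R i * (S i)⁻¹ := by
    intro i hi'
    have h : i < n - 1 := by omega
    have hi : i < n := by omega
    rw [hS i h, hR i hi, hR (i+1) hi', ← map_inv, ← map_mul, ← map_mul,
      rho_rel n i h hi hi']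
  have qcr : ∀ i : ℕ, i+1 < n → (R (i+1))⁻¹ * (R i)⁻¹ * R (i+1) * R i = (S i)^2 := by
    intro i hi'
    have h : i < n - 1 := by omega
    have hi : i < n := by omega
    rw [hS i h, hR i hi, hR (i+1) hi', ← map_pow, ← map_inv, ← map_inv, ← map_mul,
      ← map_mul, ← map_mul, crho_rel n i h hi hi']
  have h0 : (0:ℕ) < n - 1 := by omega
  set z : Q := S 0 with hzdef
  set a : ℕ → Q := fun i => S i * z⁻¹ with hadef
  -- a i is the image of an element of the commutator subgroup
  have hAc : ∀ i : ℕ, i < n-1 → ∃ g ∈ commutator (BnRP2 n), f g = a i := by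
    intro i
    induction i with
    | zero =>
      intro _
      refine ⟨1, Subgroup.one_mem _, ?_⟩
      show f 1 = S 0 * z⁻¹
      rw [hzdef, mul_inv_cancel, map_one]
    | succ i ih =>
      intro h
      have hi : i < n - 1 := by omega
      obtain ⟨g, hg, hfg⟩ := ih hi
      have hb := braid_rel n i hi h
      have h' : sigma n ⟨i+1,h⟩ * (sigma n ⟨i,hi⟩ * sigma n ⟨i+1,h⟩)
          = (sigma n ⟨i,hi⟩ * sigma n ⟨i+1,h⟩) * sigma n ⟨i,hi⟩ := by
        rw [← mul_assoc]; exact hb.symm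
      have hx : sigma n ⟨i+1,h⟩ * (sigma n ⟨i,hi⟩)⁻¹ ∈ commutator (BnRP2 n) :=
        mul_inv_mem_commutator' h'
      refine ⟨(sigma n ⟨i+1,h⟩ * (sigma n ⟨i,hi⟩)⁻¹) * g, Subgroup.mul_mem _ hx hg, ?_⟩
      rw [map_mul, hfg]
      show f _ * (S i * z⁻¹) = S (i+1) * z⁻¹
      rw [map_mul, map_inv, hS i hi, hS (i+1) h]
      group
  -- images of commutator elements commute with each other
  have hacomm : ∀ i j : ℕ, i < n-1 → j < n-1 → Commute (a i) (a j) := by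
    intro i j hi hj
    obtain ⟨g, hg, hfg⟩ := hAc i hi
    obtain ⟨g', hg', hfg'⟩ := hAc j hj
    have := hmeta g g' hg hg'
    rw [hfg, hfg'] at this
    exact this
  -- z commutes with every a i
  have haz : ∀ i : ℕ, i < n-1 → a i * z = S i := by
    intro i _; show S i * z⁻¹ * z = S i; rw [inv_mul_cancel_right]
  have hza2 : ∀ i : ℕ, 2 ≤ i → i < n-1 → Commute z (S i) := by
    intro i h2 hi
    exact qfar 0 i (by omega) hi
  have hza : ∀ i : ℕ, i < n-1 → Commute z (a i) := by
    intro i hi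
    match i, hi with
    | 0, hi =>
      show Commute z (S 0 * z⁻¹)
      rw [← hzdef, mul_inv_cancel]
      exact Commute.one_right z
    | 1, hi =>
      have h3 : (3:ℕ) < n - 1 := by omega
      have h13 : Commute (S 1) (S 3) := qfar 1 3 (by omega) h3
      have hz3 : Commute z (S 3) := hza2 3 (by omega) h3
      have ha1S3 : Commute (a 1) (S 3) := by
        have : Commute (S 1 * z⁻¹) (S 3) := h13.mul_left hz3.inv_left
        exact this
      have ha13 : Commute (a 1) (a 3) := hacomm 1 3 (by omega) h3
      have hz' : z⁻¹ = (S 3)⁻¹ * a 3 := by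
        show z⁻¹ = (S 3)⁻¹ * (S 3 * z⁻¹); rw [inv_mul_cancel_left]
      have hc1 : Commute (a 1) z⁻¹ := by
        rw [hz']
        exact (ha1S3.inv_right).mul_right ha13
      have hc2 := hc1.inv_right
      rw [inv_inv] at hc2
      exact hc2.symm
    | (i+2), hi =>
      have hzS : Commute z (S (i+2)) := hza2 (i+2) (by omega) hi
      exact hzS.mul_right (Commute.refl z).inv_right
  have hzS : ∀ i : ℕ, i < n-1 → Commute z (S i) := by
    intro i hi
    rw [← haz i hi]
    exact (hza i hi).mul_right (Commute.refl z)
  -- adjacent generators commute, hence are equal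
  have hSeq' : ∀ i : ℕ, i+1 < n-1 → S i = S (i+1) := by
    intro i h
    have hi : i < n - 1 := by omega
    have hc : Commute (S i) (S (i+1)) := by
      rw [← haz i hi, ← haz (i+1) h]
      exact ((hacomm i (i+1) hi h).mul_right (hza i hi).symm).mul_left
        ((hza (i+1) h).mul_right (Commute.refl z))
    have hb := qbraid i h
    have h2 : S i * (S (i+1) * S i) = S (i+1) * (S i * S (i+1)) := by
      rw [← mul_assoc, hb, mul_assoc]
    rw [← hc.eq] at h2
    rw [← mul_assoc, ← mul_assoc] at h2
    exact mul_right_cancel (mul_right_cancel h2)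
  have hSeq : ∀ i : ℕ, i < n-1 → S i = z := by
    intro i
    induction i with
    | zero => intro _; rfl
    | succ i ih =>
      intro h
      rw [← hSeq' i h]
      exact ih (by omega)
  -- z commutes with every R j
  have hzR : ∀ j : ℕ, j < n → Commute z (R j) := by
    intro j hj
    by_cases h2 : 2 ≤ j
    · have := qsr 0 j h0 hj (by omega) (by omega)
      rw [hSeq 0 h0] at this
      exact this
    · have := qsr 2 j (by omega) hj (by omega) (by omega)
      rw [hSeq 2 (by omega)] at this
      exact this
  -- z² = 1
  have hz2 : z^2 = 1 := by
    have h1n : (1:ℕ) < n := by omega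
    have hrr : R 1 = z⁻¹ * R 0 * z⁻¹ := by
      have := qrho 0 h1n
      rwa [hSeq 0 h0] at this
    have hc10 : Commute (R 1) (R 0) := by
      rw [hrr]
      have h0n : (0:ℕ) < n := by omega
      exact Commute.mul_left (Commute.mul_left (hzR 0 h0n).inv_left
        (Commute.refl (R 0))) (hzR 0 h0n).inv_left
    have hcr := qcr 0 h1n
    rw [hSeq 0 h0] at hcr
    rw [← hcr]
    calc (R 1)⁻¹ * (R 0)⁻¹ * R 1 * R 0 = (R 0 * R 1)⁻¹ * (R 1 * R 0) := by group
    _ = (R 1 * R 0)⁻¹ * (R 1 * R 0) := by rw [hc10.eq]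
    _ = 1 := inv_mul_cancel _
  -- all R j equal
  have hReq : ∀ j : ℕ, j < n → R j = R 0 := by
    intro j
    induction j with
    | zero => intro _; rfl
    | succ j ih =>
      intro h
      have hj : j < n := by omega
      have hc : z⁻¹ * R j = R j * z⁻¹ := ((hzR j hj).inv_left).eq
      have hq := qrho j h
      rw [hSeq j (by omega)] at hq
      calc R (j+1) = z⁻¹ * R j * z⁻¹ := hq
      _ = R j * z⁻¹ * z⁻¹ := by rw [hc]
      _ = R j * (z^2)⁻¹ := by group
      _ = R j := by rw [hz2]; group
      _ = R 0 := ih hj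
  -- every generator maps to z or R 0
  have hgen : ∀ p : Sum (Fin (n-1)) (Fin n),
      f (PresentedGroup.of (rels := vanBuskirkRels n) p) = z ∨
      f (PresentedGroup.of (rels := vanBuskirkRels n) p) = R 0 := by
    intro p
    match p with
    | Sum.inl i =>
      left
      have : f (sigma n i) = z := by
        rw [← hS i.1 i.2]
        exact hSeq i.1 i.2
      simpa [BnRP2.sigma] using this
    | Sum.inr j =>
      right
      have : f (rho n j) = R 0 := by
        rw [← hR j.1 j.2]
        exact hReq j.1 j.2
      simpa [BnRP2.rho] using this
  -- every image lies in the closure of {z, R 0}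
  have htop : ∀ x : BnRP2 n, f x ∈ Subgroup.closure ({z, R 0} : Set Q) := by
    intro x
    have hx : x ∈ Subgroup.closure (Set.range (PresentedGroup.of (rels := vanBuskirkRels n))) := by
      rw [PresentedGroup.closure_range_of]; trivial
    have hmem : f x ∈ (Subgroup.closure (Set.range
        (PresentedGroup.of (rels := vanBuskirkRels n)))).map f := ⟨x, hx, rfl⟩
    rw [MonoidHom.map_closure] at hmem
    refine Subgroup.closure_mono ?_ hmem
    rintro q ⟨-, ⟨p, rfl⟩, rfl⟩
    rcases hgen p with h | h
    · rw [h]; exact Set.mem_insert _ _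
    · rw [h]; exact Set.mem_insert_of_mem _ rfl
  -- elements of that closure commute
  have hzr0 : Commute z (R 0) := hzR 0 (by omega)
  have hcent : ∀ w ∈ ({z, R 0} : Set Q), ∀ v ∈ ({z, R 0} : Set Q), Commute w v := by
    rintro w (rfl | rfl) v (rfl | rfl)
    exacts [Commute.refl _, hzr0, hzr0.symm, Commute.refl _]
  have hA : Subgroup.closure ({z, R 0} : Set Q) ≤ Subgroup.centralizer ({z, R 0} : Set Q) :=
    (Subgroup.closure_le _).mpr (fun g hg =>
      Subgroup.mem_centralizer_iff.mpr (fun w hw => (hcent w hw g hg).eq))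
  have hcomm2 : ∀ x y : Q, x ∈ Subgroup.closure ({z, R 0} : Set Q) →
      y ∈ Subgroup.closure ({z, R 0} : Set Q) → x * y = y * x := by
    intro x y hx hy
    have h1 : ∀ w ∈ ({z, R 0} : Set Q), w * y = y * w :=
      fun w hw => Subgroup.mem_centralizer_iff.mp (hA hy) w hw
    have hB : Subgroup.closure ({z, R 0} : Set Q) ≤ Subgroup.centralizer ({y} : Set Q) :=
      (Subgroup.closure_le _).mpr (fun g hg =>
        Subgroup.mem_centralizer_iff.mpr (fun w hw => by
          rw [Set.mem_singleton_iff] at hw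
          subst hw
          exact (h1 g hg).symm))
    exact (Subgroup.mem_centralizer_iff.mp (hB hx) y rfl).symm
  intro x y
  exact hcomm2 _ _ (htop x) (htop y)

end BnRP2

open BnRP2 in
/-- For `n ≥ 5`: if `H` is a normal subgroup of `B_n(ℝP²)` contained in the commutator
subgroup such that `(B_n(ℝP²))⁽¹⁾/H` is abelian (equivalently
`⁅(B_n(ℝP²))⁽¹⁾, (B_n(ℝP²))⁽¹⁾⁆ ≤ H`), then `H = (B_n(ℝP²))⁽¹⁾`. In particular
`(B_n(ℝP²))⁽²⁾ = (B_n(ℝP²))⁽¹⁾`, i.e. the commutator subgroup is perfect. -/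
theorem commutator_BnRP2_perfect (n : ℕ) (hn : 5 ≤ n) (H : Subgroup (BnRP2 n))
    (hnorm : H.Normal) (hle : H ≤ commutator (BnRP2 n))
    (hab : ⁅commutator (BnRP2 n), commutator (BnRP2 n)⁆ ≤ H) :
    H = commutator (BnRP2 n) ∧
      derivedSeries (BnRP2 n) 2 = derivedSeries (BnRP2 n) 1 := by
  have key : ∀ (K : Subgroup (BnRP2 n)), K.Normal →
      ⁅commutator (BnRP2 n), commutator (BnRP2 n)⁆ ≤ K →
      commutator (BnRP2 n) ≤ K := by
    intro K hK hab'
    letI := hK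
    set f := QuotientGroup.mk' K with hf
    have hmeta : ∀ a b : BnRP2 n, a ∈ commutator (BnRP2 n) → b ∈ commutator (BnRP2 n) →
        f a * f b = f b * f a := by
      intro a b ha hb
      have h1 : ⁅a,b⁆ ∈ K := hab' (Subgroup.commutator_mem_commutator ha hb)
      have h2 : f ⁅a,b⁆ = 1 := (QuotientGroup.eq_one_iff _).mpr h1
      rw [map_commutatorElement] at h2
      exact (commutatorElement_eq_one_iff_commute.mp h2).eq
    have hcomm := image_comm hn f hmeta
    rw [_root_.commutator_def, Subgroup.commutator_le]
    intro g1 _ g2 _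
    have h3 : f ⁅g1,g2⁆ = 1 := by
      rw [map_commutatorElement]
      exact commutatorElement_eq_one_iff_commute.mpr (hcomm g1 g2)
    exact (QuotientGroup.eq_one_iff _).mp h3
  constructor
  · exact le_antisymm hle (key H hnorm hab)
  · have h1 : derivedSeries (BnRP2 n) 1 = commutator (BnRP2 n) := derivedSeries_one _
    have h2 : derivedSeries (BnRP2 n) 2 =
        ⁅commutator (BnRP2 n), commutator (BnRP2 n)⁆ := by
      rw [derivedSeries_succ, h1]
    have hnormal : (derivedSeries (BnRP2 n) 2).Normal := derivedSeries_normal _ _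
    have hle2 : derivedSeries (BnRP2 n) 2 ≤ commutator (BnRP2 n) := by
      rw [h2]
      exact Subgroup.commutator_le_left _ _
    rw [h1]
    exact le_antisymm hle2 (key _ hnormal (le_of_eq h2.symm))
end

section
/- For n ≥ 5, any quotient of B_n(ℝP²) that is metabelian (solvable of derived length at most 2) is in fact abelian, hence is a quotient of ℤ/2 ⊕ ℤ/2. -/
open scoped commutatorElement

private lemma helper_mul_inv_eq {G : Type*} [Group G] {x y u v : G}
    (h1 : x * v = y * u) (h2 : u * v = v * u) : x * u⁻¹ = y * v⁻¹ := by
  have h3 : v⁻¹ * u⁻¹ = u⁻¹ * v⁻¹ := by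
    rw [← mul_inv_rev, ← mul_inv_rev, h2]
  calc x * u⁻¹ = (x * v) * (v⁻¹ * u⁻¹) := by group
    _ = (y * u) * (u⁻¹ * v⁻¹) := by rw [h1, h3]
    _ = y * v⁻¹ := by group

private lemma helper_braid_eq {G : Type*} [Group G] {s a b : G}
    (hsa : s * a = a * s) (hsb : s * b = b * s) (hab : a * b = b * a)
    (h : (s*a) * (s*b) * (s*a) = (s*b) * (s*a) * (s*b)) : a = b := by
  have key : ∀ x y : G, s * x = x * s → s * y = y * s →
      (s*x)*(s*y)*(s*x) = (s*s*s)*(x*y*x) := by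
    intro x y hx hy
    have hxy : (x*y)*s = s*(x*y) := by
      calc (x*y)*s = x*(y*s) := by group
        _ = x*(s*y) := by rw [hy]
        _ = (x*s)*y := by group
        _ = (s*x)*y := by rw [hx]
        _ = s*(x*y) := by group
    calc (s*x)*(s*y)*(s*x) = (s*(x*s))*y*(s*x) := by group
      _ = (s*(s*x))*y*(s*x) := by rw [hx]
      _ = (s*s)*((x*y)*s)*x := by group
      _ = (s*s)*(s*(x*y))*x := by rw [hxy]
      _ = (s*s*s)*(x*y*x) := by group
  rw [key a b hsa hsb, key b a hsb hsa] at h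
  have h2 : a*b*a = b*a*b := mul_left_cancel h
  rw [← hab] at h2
  exact mul_left_cancel h2

private lemma helper_sigma_all_eq {Q : Type*} [Group Q]
    (hA : ∀ x y : Q, x ∈ commutator Q → y ∈ commutator Q → x * y = y * x)
    {m : ℕ} (hm : 4 ≤ m) (S : ℕ → Q)
    (hbraid : ∀ i, i + 1 < m → S i * S (i+1) * S i = S (i+1) * S i * S (i+1))
    (hfar : ∀ i j, i + 2 ≤ j → j < m → S i * S j = S j * S i) :
    ∀ i, i < m → S i = S 0 := by
  set s := S 0 with hsdef
  set a : ℕ → Q := fun i => s⁻¹ * S i with hadef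
  have hSa : ∀ i, S i = s * a i := by
    intro i; show S i = s * (s⁻¹ * S i); group
  have ha0 : a 0 = 1 := by show s⁻¹ * S 0 = 1; rw [← hsdef]; group
  have hstep : ∀ i, i + 1 < m → (S i)⁻¹ * S (i+1) ∈ commutator Q := by
    intro i h
    have hb := hbraid i h
    set x := S i with hx; set y := S (i+1) with hy
    have h2 : (x*y)*x = y*(x*y) := by
      calc (x*y)*x = y*x*y := hb
        _ = y*(x*y) := by group
    have h4 : (x*y)*x*(x*y)⁻¹ = y := by rw [h2]; group
    have h3 : x⁻¹ * y = ⁅x⁻¹, x*y⁆ := by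
      rw [commutatorElement_def, inv_inv]
      calc x⁻¹*y = x⁻¹*((x*y)*x*(x*y)⁻¹) := by rw [h4]
        _ = x⁻¹*(x*y)*x*(x*y)⁻¹ := by group
    rw [h3, commutator_def]
    exact Subgroup.commutator_mem_commutator (Subgroup.mem_top _) (Subgroup.mem_top _)
  have haA : ∀ i, i < m → a i ∈ commutator Q := by
    intro i
    induction i with
    | zero => intro _; rw [ha0]; exact Subgroup.one_mem _
    | succ k ih =>
      intro h
      have hk : a (k+1) = a k * ((S k)⁻¹ * S (k+1)) := by
        show s⁻¹ * S (k+1) = (s⁻¹ * S k) * ((S k)⁻¹ * S (k+1)); group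
      rw [hk]
      exact mul_mem (ih (by omega)) (hstep k h)
  set F : ℕ → Q := fun i => (s⁻¹ * a i * s) * (a i)⁻¹ with hFdef
  have hFeq : ∀ i j, i + 2 ≤ j → j < m → F i = F j := by
    intro i j hij hj
    have hf := hfar i j hij hj
    rw [hSa i, hSa j] at hf
    have e : (s*s)*((s⁻¹*a i*s)*(a j)) = (s*s)*((s⁻¹*a j*s)*(a i)) := by
      calc (s*s)*((s⁻¹*a i*s)*(a j)) = (s*a i)*(s*a j) := by group
        _ = (s*a j)*(s*a i) := hf
        _ = (s*s)*((s⁻¹*a j*s)*(a i)) := by group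
    have e2 := mul_left_cancel e
    have hcab : a i * a j = a j * a i := hA _ _ (haA i (by omega)) (haA j hj)
    exact helper_mul_inv_eq e2 hcab
  have hF0 : F 0 = 1 := by
    show (s⁻¹ * a 0 * s) * (a 0)⁻¹ = 1
    rw [ha0]; group
  have hF1 : ∀ i, i < m → F i = 1 := by
    intro i hi
    rcases Nat.lt_or_ge i 2 with h2 | h2
    · interval_cases i
      · exact hF0
      · rw [hFeq 1 3 (by omega) (by omega), ← hFeq 0 3 (by omega) (by omega)]
        exact hF0
    · rw [← hFeq 0 i (by omega) hi]; exact hF0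
  have hfix : ∀ i, i < m → s * a i = a i * s := by
    intro i hi
    have h := hF1 i hi
    have h2 : s⁻¹ * a i * s = a i := by
      have := mul_inv_eq_one.mp h
      exact this
    have h4 : s * (s⁻¹ * a i * s) = a i * s := by group
    rw [h2] at h4
    exact h4
  have habeq : ∀ i, i + 1 < m → a i = a (i+1) := by
    intro i h
    have hb := hbraid i h
    rw [hSa i, hSa (i+1)] at hb
    exact helper_braid_eq (hfix i (by omega)) (hfix (i+1) h)
      (hA _ _ (haA i (by omega)) (haA (i+1) h)) hb
  intro i
  induction i with
  | zero => intro _; rfl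
  | succ k ih =>
    intro h
    rw [hSa (k+1), ← habeq k h, ← hSa k]
    exact ih (by omega)


/-- For `n ≥ 5`, any metabelian quotient of `B_n(ℝP²)` (solvable of derived length at most 2)
is abelian, hence a quotient of `ℤ/2 ⊕ ℤ/2`. -/
theorem metabelian_quotient_BnRP2_abelian (n : ℕ) (hn : 5 ≤ n) (Q : Type) [Group Q]
    (φ : BnRP2 n →* Q) (hsurj : Function.Surjective φ)
    (hmet : derivedSeries Q 2 = ⊥) :
    (∀ a b : Q, a * b = b * a) ∧
      ∃ ψ : Multiplicative (ZMod 2 × ZMod 2) →* Q, Function.Surjective ψ := by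
  -- metabelian hypothesis: elements of the commutator subgroup commute
  have hA : ∀ x y : Q, x ∈ commutator Q → y ∈ commutator Q → x * y = y * x := by
    intro x y hx hy
    have h2 : derivedSeries Q 2 = ⁅commutator Q, commutator Q⁆ := by
      rw [derivedSeries_succ, derivedSeries_one]
    have : ⁅x, y⁆ ∈ derivedSeries Q 2 := by
      rw [h2]; exact Subgroup.commutator_mem_commutator hx hy
    rw [hmet] at this
    exact commutatorElement_eq_one_iff_mul_comm.mp (Subgroup.mem_bot.mp this)
  -- the composite map from the free group
  set f : FreeGroup (Sum (Fin (n-1)) (Fin n)) →* Q :=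
    φ.comp (PresentedGroup.mk (vanBuskirkRels n)) with hfdef
  have key : ∀ w ∈ vanBuskirkRels n, f w = 1 := by
    intro w hw
    have h1 : (PresentedGroup.mk (vanBuskirkRels n)) w = 1 :=
      (QuotientGroup.eq_one_iff w).mpr (Subgroup.subset_normalClosure hw)
    show φ (PresentedGroup.mk (vanBuskirkRels n) w) = 1
    rw [h1, map_one]
  set S : ℕ → Q := fun i => if h : i < n - 1 then f (FreeGroup.of (Sum.inl ⟨i, h⟩)) else 1
    with hSdef
  set R : ℕ → Q := fun j => if h : j < n then f (FreeGroup.of (Sum.inr ⟨j, h⟩)) else 1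
    with hRdef
  have hS : ∀ (i : ℕ) (h : i < n - 1), f (FreeGroup.of (Sum.inl ⟨i, h⟩)) = S i := by
    intro i h; rw [hSdef]; simp [h]
  have hR : ∀ (j : ℕ) (h : j < n), f (FreeGroup.of (Sum.inr ⟨j, h⟩)) = R j := by
    intro j h; rw [hRdef]; simp [h]
  -- extraction of the relations
  have hfar : ∀ i j : ℕ, i + 2 ≤ j → j < n - 1 → S i * S j = S j * S i := by
    intro i j hij hj
    have hi : i < n - 1 := by omega
    have hw : (FreeGroup.of (Sum.inl (⟨i,hi⟩ : Fin (n-1))) * FreeGroup.of (Sum.inl ⟨j,hj⟩) *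
        (FreeGroup.of (Sum.inl ⟨i,hi⟩))⁻¹ * (FreeGroup.of (Sum.inl ⟨j,hj⟩))⁻¹)
        ∈ vanBuskirkRels n := Or.inl ⟨⟨i,hi⟩, ⟨j,hj⟩, Or.inl hij, rfl⟩
    have h1 := key _ hw
    simp only [map_mul, map_inv] at h1
    rw [hS i hi, hS j hj] at h1
    exact commutatorElement_eq_one_iff_mul_comm.mp
      (by rw [commutatorElement_def]; exact h1)
  have hbraid : ∀ i, i + 1 < n - 1 → S i * S (i+1) * S i = S (i+1) * S i * S (i+1) := by
    intro i hi'
    have hi : i < n - 1 := by omega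
    have hw : (FreeGroup.of (Sum.inl (⟨i,hi⟩ : Fin (n-1))) * FreeGroup.of (Sum.inl ⟨i+1,hi'⟩) *
        FreeGroup.of (Sum.inl ⟨i,hi⟩) * (FreeGroup.of (Sum.inl ⟨i+1,hi'⟩))⁻¹ *
        (FreeGroup.of (Sum.inl ⟨i,hi⟩))⁻¹ * (FreeGroup.of (Sum.inl ⟨i+1,hi'⟩))⁻¹)
        ∈ vanBuskirkRels n := Or.inr (Or.inl ⟨i, hi, hi', rfl⟩)
    have h1 := key _ hw
    simp only [map_mul, map_inv] at h1
    rw [hS i hi, hS (i+1) hi'] at h1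
    have h2 : (S i * S (i+1) * S i) * (S (i+1) * S i * S (i+1))⁻¹ = 1 := by
      calc (S i * S (i+1) * S i) * (S (i+1) * S i * S (i+1))⁻¹
          = S i * S (i+1) * S i * (S (i+1))⁻¹ * (S i)⁻¹ * (S (i+1))⁻¹ := by group
        _ = 1 := h1
    exact mul_inv_eq_one.mp h2
  have hmix : ∀ i j : ℕ, i < n - 1 → j < n → j ≠ i → j ≠ i + 1 →
      S i * R j = R j * S i := by
    intro i j hi hj hj1 hj2
    have hw : (FreeGroup.of (Sum.inl (⟨i,hi⟩ : Fin (n-1))) *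
        FreeGroup.of (Sum.inr (⟨j,hj⟩ : Fin n)) * (FreeGroup.of (Sum.inl ⟨i,hi⟩))⁻¹ *
        (FreeGroup.of (Sum.inr ⟨j,hj⟩))⁻¹) ∈ vanBuskirkRels n :=
      Or.inr (Or.inr (Or.inl ⟨⟨i,hi⟩, ⟨j,hj⟩, hj1, hj2, rfl⟩))
    have h1 := key _ hw
    simp only [map_mul, map_inv] at h1
    rw [hS i hi, hR j hj] at h1
    exact commutatorElement_eq_one_iff_mul_comm.mp
      (by rw [commutatorElement_def]; exact h1)
  have hrel4 : ∀ i, i < n - 1 → S i * R (i+1) * S i = R i := by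
    intro i hi
    have hj : i < n := by omega
    have hj' : i + 1 < n := by omega
    have hw : (FreeGroup.of (Sum.inl (⟨i,hi⟩ : Fin (n-1))) *
        FreeGroup.of (Sum.inr (⟨i+1,hj'⟩ : Fin n)) * FreeGroup.of (Sum.inl ⟨i,hi⟩) *
        (FreeGroup.of (Sum.inr (⟨i,hj⟩ : Fin n)))⁻¹) ∈ vanBuskirkRels n :=
      Or.inr (Or.inr (Or.inr (Or.inl ⟨i, hi, hj, hj', rfl⟩)))
    have h1 := key _ hw
    simp only [map_mul, map_inv] at h1
    rw [hS i hi, hR (i+1) hj', hR i hj] at h1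
    exact mul_inv_eq_one.mp h1
  have hrel5 : ∀ i, i < n - 1 →
      (R (i+1))⁻¹ * (R i)⁻¹ * R (i+1) * R i = (S i)^2 := by
    intro i hi
    have hj : i < n := by omega
    have hj' : i + 1 < n := by omega
    have hw : ((FreeGroup.of (Sum.inr (⟨i+1,hj'⟩ : Fin n)))⁻¹ *
        (FreeGroup.of (Sum.inr (⟨i,hj⟩ : Fin n)))⁻¹ *
        FreeGroup.of (Sum.inr (⟨i+1,hj'⟩ : Fin n)) *
        FreeGroup.of (Sum.inr (⟨i,hj⟩ : Fin n)) *
        ((FreeGroup.of (Sum.inl (⟨i,hi⟩ : Fin (n-1))))⁻¹)^2) ∈ vanBuskirkRels n :=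
      Or.inr (Or.inr (Or.inr (Or.inr (Or.inl ⟨i, hi, hj, hj', rfl⟩))))
    have h1 := key _ hw
    simp only [map_mul, map_inv, map_pow] at h1
    rw [hS i hi, hR (i+1) hj', hR i hj] at h1
    have h2 : ((R (i+1))⁻¹ * (R i)⁻¹ * R (i+1) * R i) * ((S i)^2)⁻¹ = 1 := by
      calc ((R (i+1))⁻¹ * (R i)⁻¹ * R (i+1) * R i) * ((S i)^2)⁻¹
          = (R (i+1))⁻¹ * (R i)⁻¹ * R (i+1) * R i * ((S i)⁻¹)^2 := by group
        _ = 1 := h1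
    exact mul_inv_eq_one.mp h2
  -- all σ's map to the same element
  have hSall : ∀ i, i < n - 1 → S i = S 0 :=
    helper_sigma_all_eq hA (by omega) S hbraid hfar
  -- S 0 commutes with every R j
  have hsR : ∀ j, j < n → S 0 * R j = R j * S 0 := by
    intro j hj
    by_cases h2 : j < 2
    · have h := hmix 2 j (by omega) hj (by omega) (by omega)
      rw [hSall 2 (by omega)] at h
      exact h
    · exact hmix 0 j (by omega) hj (by omega) (by omega)
  -- S 0 squares to 1
  have hs2 : (S 0)^2 = 1 := by
    have h40 : R 0 = S 0 * R 1 * S 0 := (hrel4 0 (by omega)).symm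
    have hc : Commute (R 1) (S 0) := (hsR 1 (by omega)).symm
    have hcR : Commute (R 1) (R 0) := by
      rw [h40]
      exact (hc.symm.symm.mul_right (Commute.refl (R 1))).mul_right hc
    have h5 := hrel5 0 (by omega)
    have hone : (R 1)⁻¹ * (R 0)⁻¹ * R 1 * R 0 = 1 := by
      have hcc : ⁅(R 1)⁻¹, (R 0)⁻¹⁆ = 1 :=
        commutatorElement_eq_one_iff_mul_comm.mpr (hcR.inv_left.inv_right).eq
      rw [commutatorElement_def, inv_inv, inv_inv] at hcc
      exact hcc
    rw [← h5]
    exact hone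
  -- all ρ's map to the same element
  have hstepR : ∀ i, i < n - 1 → R i = R (i+1) := by
    intro i hi
    have h4 := hrel4 i hi
    rw [hSall i hi] at h4
    have hc := hsR (i+1) (by omega)
    calc R i = S 0 * R (i+1) * S 0 := h4.symm
      _ = R (i+1) * (S 0 * S 0) := by rw [hc]; group
      _ = R (i+1) * (S 0)^2 := by rw [pow_two]
      _ = R (i+1) := by rw [hs2, mul_one]
  have hRall : ∀ j, j < n → R j = R 0 := by
    intro j
    induction j with
    | zero => intro _; rfl
    | succ k ih =>
      intro h
      rw [← hstepR k (by omega)]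
      exact ih (by omega)
  -- R 0 squares to 1 (from relation 6)
  have hr2 : (R 0)^2 = 1 := by
    have h0 : 0 < n := by omega
    have hw : ((FreeGroup.of (Sum.inr (⟨0,h0⟩ : Fin n)))^2 *
        (((List.finRange (n-1)).map (fun i => FreeGroup.of (Sum.inl i))).prod *
         (((List.finRange (n-1)).reverse.map (fun i => FreeGroup.of (Sum.inl i))).prod))⁻¹)
        ∈ vanBuskirkRels n :=
      Or.inr (Or.inr (Or.inr (Or.inr (Or.inr ⟨h0, rfl⟩))))
    have h1 := key _ hw
    simp only [map_mul, map_inv, map_pow, map_list_prod, List.map_map] at h1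
    rw [hR 0 h0] at h1
    have hallS : ∀ (l : List (Fin (n-1))),
        (l.map (f ∘ fun i => FreeGroup.of (Sum.inl i))).prod = (S 0) ^ l.length := by
      intro l
      rw [List.prod_eq_pow_card _ (S 0), List.length_map]
      intro x hx
      obtain ⟨i, _, rfl⟩ := List.mem_map.mp hx
      show f (FreeGroup.of (Sum.inl i)) = S 0
      rw [hS i.val i.isLt]
      exact hSall i.val i.isLt
    rw [hallS, hallS, List.length_reverse, List.length_finRange] at h1
    have h2 : (R 0)^2 = (S 0)^(n-1) * (S 0)^(n-1) := mul_inv_eq_one.mp h1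
    rw [h2, ← pow_add, ← two_mul, pow_mul, hs2, one_pow]
  -- Q is generated by S 0 and R 0
  have hgen : ∀ x : Sum (Fin (n-1)) (Fin n),
      φ (PresentedGroup.of x) ∈ ({S 0, R 0} : Set Q) := by
    intro x
    cases x with
    | inl i =>
      left
      show f (FreeGroup.of (Sum.inl i)) = S 0
      rw [hS i.val i.isLt]; exact hSall i.val i.isLt
    | inr j =>
      right
      show f (FreeGroup.of (Sum.inr j)) ∈ ({R 0} : Set Q)
      rw [hR j.val j.isLt]
      exact hRall j.val j.isLt
  have htop : Subgroup.closure ({S 0, R 0} : Set Q) = ⊤ := by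
    rw [eq_top_iff]
    intro q _
    obtain ⟨p, rfl⟩ := hsurj q
    have hp : p ∈ Subgroup.closure (Set.range (PresentedGroup.of :
        Sum (Fin (n-1)) (Fin n) → BnRP2 n)) := by
      rw [PresentedGroup.closure_range_of]; exact Subgroup.mem_top p
    refine Subgroup.closure_induction
      (p := fun x _ => φ x ∈ Subgroup.closure ({S 0, R 0} : Set Q)) ?_ ?_ ?_ ?_ hp
    · rintro x ⟨y, rfl⟩
      exact Subgroup.subset_closure (hgen y)
    · show φ (1 : BnRP2 n) ∈ _
      rw [map_one]; exact Subgroup.one_mem _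
    · intro x y _ _ hx hy
      show φ (x * y) ∈ _
      rw [map_mul]; exact Subgroup.mul_mem _ hx hy
    · intro x _ hx
      show φ x⁻¹ ∈ _
      rw [map_inv]; exact Subgroup.inv_mem _ hx
  have hpair : ∀ x ∈ ({S 0, R 0} : Set Q), ∀ y ∈ ({S 0, R 0} : Set Q),
      x * y = y * x := by
    intro x hx y hy
    rcases hx with rfl | hx <;> rcases hy with rfl | hy
    · rfl
    · rw [Set.mem_singleton_iff] at hy; subst hy; exact hsR 0 (by omega)
    · rw [Set.mem_singleton_iff] at hx; subst hx; exact (hsR 0 (by omega)).symm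
    · rw [Set.mem_singleton_iff] at hx hy; subst hx; subst hy; rfl
  letI : CommGroup (Subgroup.closure ({S 0, R 0} : Set Q)) :=
    Subgroup.closureCommGroupOfComm hpair
  have hcommQ : ∀ a b : Q, a * b = b * a := by
    intro a b
    have haM : a ∈ Subgroup.closure ({S 0, R 0} : Set Q) := by
      rw [htop]; exact Subgroup.mem_top a
    have hbM : b ∈ Subgroup.closure ({S 0, R 0} : Set Q) := by
      rw [htop]; exact Subgroup.mem_top b
    have := mul_comm (⟨a, haM⟩ : Subgroup.closure ({S 0, R 0} : Set Q)) ⟨b, hbM⟩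
    exact Subtype.ext_iff.mp this
  refine ⟨hcommQ, ?_⟩
  letI : CommGroup Q := { (inferInstance : Group Q) with mul_comm := hcommQ }
  -- the surjection from (ℤ/2)²
  have hpow2 : ∀ (x : Q), x^2 = 1 → ∀ (u v : ZMod 2),
      x ^ ((u + v).val) = x ^ u.val * x ^ v.val := by
    intro x hx u v
    have hmod : ∀ k : ℕ, x ^ (k % 2) = x ^ k := by
      intro k
      conv_rhs => rw [← Nat.div_add_mod k 2]
      rw [pow_add, pow_mul, hx, one_pow, one_mul]
    rw [ZMod.val_add, hmod, pow_add]
  set ψ : Multiplicative (ZMod 2 × ZMod 2) →* Q := MonoidHom.mk'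
    (fun p => S 0 ^ ((Multiplicative.toAdd p).1.val) *
              R 0 ^ ((Multiplicative.toAdd p).2.val))
    (by
      intro p q
      show S 0 ^ (((Multiplicative.toAdd p).1 + (Multiplicative.toAdd q).1).val) *
           R 0 ^ (((Multiplicative.toAdd p).2 + (Multiplicative.toAdd q).2).val) = _
      rw [hpow2 _ hs2, hpow2 _ hr2]
      exact mul_mul_mul_comm _ _ _ _) with hψdef
  refine ⟨ψ, ?_⟩
  have hrange : Subgroup.closure ({S 0, R 0} : Set Q) ≤ ψ.range := by
    rw [Subgroup.closure_le]
    intro x hx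
    rcases hx with rfl | hx
    · refine ⟨Multiplicative.ofAdd ((1 : ZMod 2), (0 : ZMod 2)), ?_⟩
      show S 0 ^ ((1 : ZMod 2).val) * R 0 ^ ((0 : ZMod 2).val) = S 0
      norm_num [ZMod.val_one, ZMod.val_zero]
    · rw [Set.mem_singleton_iff] at hx; subst hx
      refine ⟨Multiplicative.ofAdd ((0 : ZMod 2), (1 : ZMod 2)), ?_⟩
      show S 0 ^ ((0 : ZMod 2).val) * R 0 ^ ((1 : ZMod 2).val) = R 0
      norm_num [ZMod.val_one, ZMod.val_zero]
  intro q
  have hq : q ∈ ψ.range := hrange (by rw [htop]; exact Subgroup.mem_top q)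
  exact hq
end

section
/- The quotient B₃(ℝP²)/(B₃(ℝP²))^{(2)} of the braid group of the projective plane on 3 strings by the second derived subgroup is isomorphic to the dihedral group D₁₂ of order 12. -/
instance : (derivedSeries (BnRP2 3) 2).Normal := derivedSeries_normal _ _

namespace B3X

open scoped commutatorElement

abbrev G := BnRP2 3

def ga : G := PresentedGroup.of (Sum.inl ⟨0, by norm_num⟩)
def gb : G := PresentedGroup.of (Sum.inl ⟨1, by norm_num⟩)
def gx : G := PresentedGroup.of (Sum.inr ⟨0, by norm_num⟩)
def gy : G := PresentedGroup.of (Sum.inr ⟨1, by norm_num⟩)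
def gz : G := PresentedGroup.of (Sum.inr ⟨2, by norm_num⟩)

lemma relator_eq_one {w : FreeGroup (Sum (Fin 2) (Fin 3))} (hw : w ∈ vanBuskirkRels 3) :
    PresentedGroup.mk (vanBuskirkRels 3) w = 1 :=
  (QuotientGroup.eq_one_iff w).mpr (Subgroup.subset_normalClosure hw)

lemma grel1 : ga * gb * ga = gb * ga * gb := by
  have h := relator_eq_one (Or.inr (Or.inl ⟨0, by norm_num, by norm_num, rfl⟩))
  simp only [map_mul, map_inv] at h
  have h2 : (ga * gb * ga) * (gb * ga * gb)⁻¹ = 1 := by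
    rw [← h]; unfold ga gb PresentedGroup.of; group
  exact mul_inv_eq_one.mp h2

lemma grel2 : ga * gz = gz * ga := by
  have h := relator_eq_one (Or.inr (Or.inr (Or.inl ⟨⟨0, by norm_num⟩, ⟨2, by norm_num⟩, by norm_num, by norm_num, rfl⟩)))
  simp only [map_mul, map_inv] at h
  have h2 : (ga * gz) * (gz * ga)⁻¹ = 1 := by
    rw [← h]; unfold ga gz PresentedGroup.of; group
  exact mul_inv_eq_one.mp h2

lemma grel3 : gb * gx = gx * gb := by
  have h := relator_eq_one (Or.inr (Or.inr (Or.inl ⟨⟨1, by norm_num⟩, ⟨0, by norm_num⟩, by norm_num, by norm_num, rfl⟩)))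
  simp only [map_mul, map_inv] at h
  have h2 : (gb * gx) * (gx * gb)⁻¹ = 1 := by
    rw [← h]; unfold gb gx PresentedGroup.of; group
  exact mul_inv_eq_one.mp h2

lemma grel4 : gx = ga * gy * ga := by
  have h := relator_eq_one (Or.inr (Or.inr (Or.inr (Or.inl ⟨0, by norm_num, by norm_num, by norm_num, rfl⟩))))
  simp only [map_mul, map_inv] at h
  have h2 : (ga * gy * ga) * gx⁻¹ = 1 := by
    rw [← h]; unfold ga gx gy PresentedGroup.of; group
  exact (mul_inv_eq_one.mp h2).symm

lemma grel5 : gy = gb * gz * gb := by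
  have h := relator_eq_one (Or.inr (Or.inr (Or.inr (Or.inl ⟨1, by norm_num, by norm_num, by norm_num, rfl⟩))))
  simp only [map_mul, map_inv] at h
  have h2 : (gb * gz * gb) * gy⁻¹ = 1 := by
    rw [← h]; unfold gb gy gz PresentedGroup.of; group
  exact (mul_inv_eq_one.mp h2).symm

lemma grel6 : gy⁻¹ * gx⁻¹ * gy * gx = ga^2 := by
  have h := relator_eq_one (Or.inr (Or.inr (Or.inr (Or.inr (Or.inl ⟨0, by norm_num, by norm_num, by norm_num, rfl⟩)))))
  simp only [map_mul, map_inv, map_pow] at h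
  have h2 : (gy⁻¹ * gx⁻¹ * gy * gx) * (ga^2)⁻¹ = 1 := by
    rw [← h]; unfold ga gx gy PresentedGroup.of; group
  rw [← mul_inv_eq_one]; exact h2

lemma grel7 : gz⁻¹ * gy⁻¹ * gz * gy = gb^2 := by
  have h := relator_eq_one (Or.inr (Or.inr (Or.inr (Or.inr (Or.inl ⟨1, by norm_num, by norm_num, by norm_num, rfl⟩)))))
  simp only [map_mul, map_inv, map_pow] at h
  have h2 : (gz⁻¹ * gy⁻¹ * gz * gy) * (gb^2)⁻¹ = 1 := by
    rw [← h]; unfold gb gy gz PresentedGroup.of; group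
  rw [← mul_inv_eq_one]; exact h2

lemma grel8 : gx^2 = ga * gb^2 * ga := by
  have h := relator_eq_one (Or.inr (Or.inr (Or.inr (Or.inr (Or.inr ⟨by norm_num, rfl⟩)))))
  simp only [List.finRange, map_mul, map_inv, map_pow] at h
  have h2 : gx^2 * (ga * gb^2 * ga)⁻¹ = 1 := by
    rw [← h]
    unfold ga gb gx PresentedGroup.of
    norm_num [List.finRange, List.range, List.range.loop]
    group
  rw [← mul_inv_eq_one]; exact h2

abbrev M := G ⧸ derivedSeries G 2

def pi : G →* M := QuotientGroup.mk' _

noncomputable def a : M := pi ga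
noncomputable def b : M := pi gb
noncomputable def x : M := pi gx
noncomputable def y : M := pi gy
noncomputable def z : M := pi gz

lemma rel1 : a * b * a = b * a * b := by unfold a b; rw [← map_mul, ← map_mul, ← map_mul, ← map_mul, grel1]
lemma rel2 : a * z = z * a := by unfold a z; rw [← map_mul, ← map_mul, grel2]
lemma rel3 : b * x = x * b := by unfold b x; rw [← map_mul, ← map_mul, grel3]
lemma rel4 : x = a * y * a := by unfold a x y; rw [← map_mul, ← map_mul, grel4]
lemma rel5 : y = b * z * b := by unfold b y z; rw [← map_mul, ← map_mul, grel5]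
lemma rel6 : y⁻¹ * x⁻¹ * y * x = a^2 := by
  unfold a x y; rw [← map_inv, ← map_inv, ← map_mul, ← map_mul, ← map_mul, ← map_pow, grel6]
lemma rel7 : z⁻¹ * y⁻¹ * z * y = b^2 := by
  unfold b y z; rw [← map_inv, ← map_inv, ← map_mul, ← map_mul, ← map_mul, ← map_pow, grel7]
lemma rel8 : x^2 = a * b^2 * a := by
  unfold a b x; rw [← map_pow, ← map_pow, ← map_mul, ← map_mul, grel8]

lemma dsM2 : derivedSeries M 2 = ⊥ := by
  rw [← map_derivedSeries_eq (QuotientGroup.mk'_surjective (derivedSeries G 2)) 2,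
    eq_bot_iff]
  intro m hm
  simp only [Subgroup.mem_map] at hm
  obtain ⟨g, hg, rfl⟩ := hm
  exact (QuotientGroup.eq_one_iff g).mpr hg

abbrev K : Subgroup M := _root_.commutator M

lemma hcomm : ∀ p q : M, p ∈ K → q ∈ K → Commute p q := by
  intro p q hp hq
  have h1p : p ∈ derivedSeries M 1 := by rwa [derivedSeries_one]
  have h1q : q ∈ derivedSeries M 1 := by rwa [derivedSeries_one]
  have h2 : ⁅p, q⁆ ∈ derivedSeries M 2 :=
    (derivedSeries_succ M 1) ▸ Subgroup.commutator_mem_commutator h1p h1q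
  rw [dsM2, Subgroup.mem_bot] at h2
  exact commutatorElement_eq_one_iff_commute.mp h2

lemma memK_iff (w : M) : w ∈ K ↔ Abelianization.of w = 1 :=
  (QuotientGroup.eq_one_iff w).symm

lemma ab_ba : Abelianization.of b = Abelianization.of a := by
  have h := congrArg Abelianization.of rel1
  simp only [map_mul] at h
  have h2 : Abelianization.of a * (Abelianization.of a * Abelianization.of b) =
      Abelianization.of a * (Abelianization.of b * Abelianization.of b) := by
    rw [mul_comm (Abelianization.of a) (Abelianization.of b)] at h ⊢
    rw [mul_comm] at h
    calc Abelianization.of a * (Abelianization.of b * Abelianization.of a)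
        = Abelianization.of a * Abelianization.of b * Abelianization.of a := by rw [mul_assoc]
      _ = Abelianization.of b * Abelianization.of a * Abelianization.of b := h
      _ = _ := by rw [mul_comm (Abelianization.of b) (Abelianization.of a), mul_assoc]
  have := mul_left_cancel h2
  exact (mul_left_cancel ((mul_comm (Abelianization.of b) (Abelianization.of a)).trans this).symm)

lemma ab_a2 : (Abelianization.of a)^2 = 1 := by
  have h := congrArg Abelianization.of rel6
  simp only [map_mul, map_inv, map_pow] at h
  rw [← h]
  rw [mul_comm ((Abelianization.of y)⁻¹ * (Abelianization.of x)⁻¹ * Abelianization.of y)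
    (Abelianization.of x)]
  rw [mul_comm ((Abelianization.of y)⁻¹ * (Abelianization.of x)⁻¹) (Abelianization.of y)]
  group

lemma ab_b2 : (Abelianization.of b)^2 = 1 := by
  have h := congrArg Abelianization.of rel7
  simp only [map_mul, map_inv, map_pow] at h
  rw [← h]
  rw [mul_comm ((Abelianization.of z)⁻¹ * (Abelianization.of y)⁻¹ * Abelianization.of z)
    (Abelianization.of y)]
  rw [mul_comm ((Abelianization.of z)⁻¹ * (Abelianization.of y)⁻¹) (Abelianization.of z)]
  group

lemma ab_yx : Abelianization.of y = Abelianization.of x := by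
  have h := congrArg Abelianization.of rel4
  simp only [map_mul] at h
  rw [h, mul_comm (Abelianization.of a) (Abelianization.of y), mul_assoc,
    ← pow_two, ab_a2, mul_one]

lemma ab_zy : Abelianization.of z = Abelianization.of y := by
  have h := congrArg Abelianization.of rel5
  simp only [map_mul] at h
  rw [h, mul_comm (Abelianization.of b) (Abelianization.of z), mul_assoc,
    ← pow_two, ab_b2, mul_one]

lemma ab_x2 : (Abelianization.of x)^2 = 1 := by
  have h := congrArg Abelianization.of rel8
  simp only [map_mul, map_pow] at h
  rw [h, mul_comm (Abelianization.of a) ((Abelianization.of b)^2), mul_assoc,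
    ← pow_two, ab_a2, mul_one, ab_b2]

lemma memd : a⁻¹ * b ∈ K := by
  rw [memK_iff, map_mul, map_inv, ab_ba, inv_mul_cancel]

lemma meme : x⁻¹ * y ∈ K := by
  rw [memK_iff, map_mul, map_inv, ab_yx, inv_mul_cancel]

lemma memf : x⁻¹ * z ∈ K := by
  rw [memK_iff, map_mul, map_inv, ab_zy, ab_yx, inv_mul_cancel]

lemma memk : a * x * a⁻¹ * x⁻¹ ∈ K :=
  Subgroup.commutator_mem_commutator (Subgroup.mem_top a) (Subgroup.mem_top x)

lemma memA : a^2 ∈ K := by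
  rw [memK_iff, map_pow, ab_a2]

lemma memX : x^2 ∈ K := by
  rw [memK_iff, map_pow, ab_x2]

noncomputable instance : CommGroup ↥K :=
  { (inferInstance : Group ↥K) with
    mul_comm := fun p q => Subtype.ext ((hcomm p q p.2 q.2).eq) }

noncomputable def sA : MulAut ↥K := MulAut.conjNormal a
noncomputable def sX : MulAut ↥K := MulAut.conjNormal x

lemma sA_coe (p : ↥K) : (↑(sA p) : M) = a * ↑p * a⁻¹ := MulAut.conjNormal_apply a p
lemma sX_coe (p : ↥K) : (↑(sX p) : M) = x * ↑p * x⁻¹ := MulAut.conjNormal_apply x p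

lemma sA_coe' (p : ↥K) : (↑(sA p) : M) = a⁻¹ * ↑p * a := by
  rw [sA_coe]
  have h := (hcomm _ _ memA p.2).eq
  calc a * ↑p * a⁻¹ = a⁻¹ * (a^2 * ↑p) * a⁻¹ := by group
    _ = a⁻¹ * (↑p * a^2) * a⁻¹ := by rw [h]
    _ = a⁻¹ * ↑p * a := by group

lemma sX_coe' (p : ↥K) : (↑(sX p) : M) = x⁻¹ * ↑p * x := by
  rw [sX_coe]
  have h := (hcomm _ _ memX p.2).eq
  calc x * ↑p * x⁻¹ = x⁻¹ * (x^2 * ↑p) * x⁻¹ := by group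
    _ = x⁻¹ * (↑p * x^2) * x⁻¹ := by rw [h]
    _ = x⁻¹ * ↑p * x := by group

lemma sAsA (p : ↥K) : sA (sA p) = p := by
  apply Subtype.ext
  rw [sA_coe, sA_coe']
  group

lemma sXsX (p : ↥K) : sX (sX p) = p := by
  apply Subtype.ext
  rw [sX_coe, sX_coe']
  group

lemma sXsA (p : ↥K) : sX (sA p) = sA (sX p) := by
  apply Subtype.ext
  rw [sX_coe, sA_coe', sA_coe', sX_coe]
  have hm : x * ↑p * x⁻¹ ∈ K := by rw [← sX_coe]; exact (sX p).2
  have h := (hcomm _ _ memk hm).eq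
  calc x * (a⁻¹ * ↑p * a) * x⁻¹
      = a⁻¹ * ((a*x*a⁻¹*x⁻¹) * (x*↑p*x⁻¹) * (a*x*a⁻¹*x⁻¹)⁻¹) * a := by group
    _ = a⁻¹ * ((x*↑p*x⁻¹) * (a*x*a⁻¹*x⁻¹) * (a*x*a⁻¹*x⁻¹)⁻¹) * a := by rw [h]
    _ = a⁻¹ * (x * ↑p * x⁻¹) * a := by group

noncomputable def Dd : ↥K := ⟨a⁻¹ * b, memd⟩
noncomputable def Ee : ↥K := ⟨x⁻¹ * y, meme⟩
noncomputable def Ff : ↥K := ⟨x⁻¹ * z, memf⟩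
noncomputable def Kk : ↥K := ⟨a * x * a⁻¹ * x⁻¹, memk⟩
noncomputable def Aa : ↥K := ⟨a^2, memA⟩

lemma hcommAb : Commute (a^2) b := by
  have h1 : Commute (a^2) (a*(a⁻¹*b)) :=
    Commute.mul_right ((Commute.refl a).pow_left 2) (hcomm _ _ memA memd)
  simpa using h1

lemma B1 : sA Dd = Dd * Dd := by
  apply Subtype.ext
  push_cast
  rw [sA_coe]
  show a * (a⁻¹ * b) * a⁻¹ = (a⁻¹ * b) * (a⁻¹ * b)
  calc a * (a⁻¹ * b) * a⁻¹
      = a⁻¹*a⁻¹*(a^2*b)*a⁻¹ := by group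
    _ = a⁻¹*a⁻¹*(b*a^2)*a⁻¹ := by rw [hcommAb.eq]
    _ = a⁻¹*a⁻¹*a⁻¹*(a*b*a) := by group
    _ = a⁻¹*a⁻¹*a⁻¹*(b*a*b) := by rw [rel1]
    _ = a⁻¹*((a^2)⁻¹*b)*a*b := by group
    _ = a⁻¹*(b*(a^2)⁻¹)*a*b := by rw [(hcommAb.inv_left).eq]
    _ = (a⁻¹*b)*(a⁻¹*b) := by group

lemma B2 : sA (sX Ff) = sX Ff * Kk⁻¹ := by
  apply Subtype.ext
  push_cast
  rw [sA_coe, sX_coe]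
  show a*(x*(x⁻¹*z)*x⁻¹)*a⁻¹ = x*(x⁻¹*z)*x⁻¹*(a*x*a⁻¹*x⁻¹)⁻¹
  calc a*(x*(x⁻¹*z)*x⁻¹)*a⁻¹ = (a*z)*x⁻¹*a⁻¹ := by group
    _ = (z*a)*x⁻¹*a⁻¹ := by rw [rel2]
    _ = x*(x⁻¹*z)*x⁻¹*(a*x*a⁻¹*x⁻¹)⁻¹ := by group

lemma B3 : sX Dd = sA Kk * Dd := by
  apply Subtype.ext
  push_cast
  rw [sX_coe, sA_coe']
  show x*(a⁻¹*b)*x⁻¹ = a⁻¹*(a*x*a⁻¹*x⁻¹)*a*(a⁻¹*b)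
  have rel3' : b*x⁻¹ = x⁻¹*b := by
    calc b*x⁻¹ = x⁻¹*(x*b)*x⁻¹ := by group
      _ = x⁻¹*(b*x)*x⁻¹ := by rw [rel3]
      _ = x⁻¹*b := by group
  calc x*(a⁻¹*b)*x⁻¹ = x*a⁻¹*(b*x⁻¹) := by group
    _ = x*a⁻¹*(x⁻¹*b) := by rw [rel3']
    _ = a⁻¹*(a*x*a⁻¹*x⁻¹)*a*(a⁻¹*b) := by group

lemma B4 : Aa⁻¹ = sA (sX Kk) * Ee := by
  apply Subtype.ext
  push_cast
  rw [sA_coe', sX_coe']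
  show (a^2)⁻¹ = a⁻¹*(x⁻¹*(a*x*a⁻¹*x⁻¹)*x)*a*(x⁻¹*y)
  rw [rel4]
  group

lemma B5 : Ee = sX Kk * Aa * sA (sX Dd) * sA Ff * Dd := by
  apply Subtype.ext
  push_cast
  rw [sX_coe', sA_coe', sX_coe', sA_coe']
  show x⁻¹*y = (x⁻¹*(a*x*a⁻¹*x⁻¹)*x)*a^2*(a⁻¹*(x⁻¹*(a⁻¹*b)*x)*a)*(a⁻¹*(x⁻¹*z)*a)*(a⁻¹*b)
  rw [rel5]
  group

lemma B6 : Aa = Ee⁻¹ * sX Ee := by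
  apply Subtype.ext
  push_cast
  rw [sX_coe']
  show a^2 = (x⁻¹*y)⁻¹*(x⁻¹*(x⁻¹*y)*x)
  rw [← rel6]
  group

lemma B7 : Aa * sA Dd * Dd = Ff⁻¹ * (sX Ee)⁻¹ * sX Ff * Ee := by
  apply Subtype.ext
  push_cast
  rw [sA_coe', sX_coe', sX_coe']
  show a^2*(a⁻¹*(a⁻¹*b)*a)*(a⁻¹*b) = (x⁻¹*z)⁻¹*(x⁻¹*(x⁻¹*y)*x)⁻¹*(x⁻¹*(x⁻¹*z)*x)*(x⁻¹*y)
  calc a^2*(a⁻¹*(a⁻¹*b)*a)*(a⁻¹*b) = b*b := by group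
    _ = b^2 := by rw [pow_two]
    _ = z⁻¹*y⁻¹*z*y := rel7.symm
    _ = (x⁻¹*z)⁻¹*(x⁻¹*(x⁻¹*y)*x)⁻¹*(x⁻¹*(x⁻¹*z)*x)*(x⁻¹*y) := by group

noncomputable def Z1 : ↥K := sA Dd * (Dd * Dd)⁻¹
lemma hZ1 : Z1 = 1 := by unfold Z1; rw [B1]; group

noncomputable def Z2 : ↥K := sA (sX Ff) * (sX Ff * Kk⁻¹)⁻¹
lemma hZ2 : Z2 = 1 := by unfold Z2; rw [B2]; group

noncomputable def Z3 : ↥K := sX Dd * (sA Kk * Dd)⁻¹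
lemma hZ3 : Z3 = 1 := by unfold Z3; rw [B3]; group

noncomputable def Z4 : ↥K := sA (sX Kk) * Ee * Aa
lemma hZ4 : Z4 = 1 := by unfold Z4; rw [← B4]; group

noncomputable def Z5 : ↥K := Ee * (sX Kk * Aa * sA (sX Dd) * sA Ff * Dd)⁻¹
lemma hZ5 : Z5 = 1 := by unfold Z5; rw [B5]; group

noncomputable def Z6 : ↥K := Aa * (Ee⁻¹ * sX Ee)⁻¹
lemma hZ6 : Z6 = 1 := by unfold Z6; rw [B6]; group

noncomputable def Z7 : ↥K := Aa * sA Dd * Dd * (Ff⁻¹ * (sX Ee)⁻¹ * sX Ff * Ee)⁻¹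
lemma hZ7 : Z7 = 1 := by unfold Z7; rw [B7]; group

lemma goalE : Ee = 1 := by
  have key : Ee = (sA (Z1))^(2:ℤ) * (sX Z1)^(-3:ℤ) * (sA (sX Z1))^(-5:ℤ) * (Z2)^(-3:ℤ) * (sX Z2)^(1:ℤ) * (sA (sX Z2))^(-1:ℤ) * (sA (Z3))^(-2:ℤ) * (Z4)^(2:ℤ) * (sA (Z4))^(1:ℤ) * (sA (sX Z4))^(-2:ℤ) * (Z5)^(2:ℤ) * (sA (Z5))^(1:ℤ) * (sX Z5)^(-3:ℤ) * (sA (sX Z6))^(2:ℤ) * (sX Z7)^(-3:ℤ) := by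
    unfold Z1 Z2 Z3 Z4 Z5 Z6 Z7
    simp only [map_mul, map_inv, map_zpow, sAsA, sXsX, sXsA]
    refine Additive.ofMul.injective ?_
    simp only [ofMul_mul, ofMul_inv, ofMul_zpow, ofMul_pow]
    abel
  rw [hZ1, hZ2, hZ3, hZ4, hZ5, hZ6, hZ7] at key
  simp only [map_one, one_zpow, mul_one, one_mul] at key
  exact key

lemma goalF : Ff = 1 := by
  have key : Ff = (sA (Z1))^(4:ℤ) * (sX Z1)^(-5:ℤ) * (sA (sX Z1))^(-9:ℤ) * (Z2)^(-6:ℤ) * (sX Z2)^(1:ℤ) * (sA (sX Z2))^(-2:ℤ) * (sA (Z3))^(-4:ℤ) * (sX Z3)^(-1:ℤ) * (Z4)^(3:ℤ) * (sA (Z4))^(2:ℤ) * (sA (sX Z4))^(-4:ℤ) * (Z5)^(3:ℤ) * (sA (Z5))^(2:ℤ) * (sX Z5)^(-6:ℤ) * (sA (sX Z6))^(4:ℤ) * (sX Z7)^(-6:ℤ) := by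
    unfold Z1 Z2 Z3 Z4 Z5 Z6 Z7
    simp only [map_mul, map_inv, map_zpow, sAsA, sXsX, sXsA]
    refine Additive.ofMul.injective ?_
    simp only [ofMul_mul, ofMul_inv, ofMul_zpow, ofMul_pow]
    abel
  rw [hZ1, hZ2, hZ3, hZ4, hZ5, hZ6, hZ7] at key
  simp only [map_one, one_zpow, mul_one, one_mul] at key
  exact key

lemma goalA : Aa = 1 := by
  have key : Aa = (sA (Z1))^(1:ℤ) * (sX Z1)^(-1:ℤ) * (sA (sX Z1))^(-2:ℤ) * (Z2)^(-1:ℤ) * (sX Z2)^(-1:ℤ) * (sA (sX Z2))^(-1:ℤ) * (sA (Z3))^(-2:ℤ) * (sX Z3)^(-1:ℤ) * (Z4)^(1:ℤ) * (sA (Z4))^(1:ℤ) * (sA (sX Z4))^(-2:ℤ) * (sA (Z5))^(1:ℤ) * (sX Z5)^(-1:ℤ) * (sA (sX Z6))^(2:ℤ) * (sX Z7)^(-1:ℤ) := by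
    unfold Z1 Z2 Z3 Z4 Z5 Z6 Z7
    simp only [map_mul, map_inv, map_zpow, sAsA, sXsX, sXsA]
    refine Additive.ofMul.injective ?_
    simp only [ofMul_mul, ofMul_inv, ofMul_zpow, ofMul_pow]
    abel
  rw [hZ1, hZ2, hZ3, hZ4, hZ5, hZ6, hZ7] at key
  simp only [map_one, one_zpow, mul_one, one_mul] at key
  exact key

lemma goalD3 : Dd^(3:ℤ) = 1 := by
  have key : Dd^(3:ℤ) = (sA (Z1))^(-9:ℤ) * (sX Z1)^(10:ℤ) * (sA (sX Z1))^(20:ℤ) * (Z2)^(12:ℤ) * (sA (sX Z2))^(6:ℤ) * (sA (Z3))^(12:ℤ) * (sX Z3)^(6:ℤ) * (Z4)^(-6:ℤ) * (sA (Z4))^(-6:ℤ) * (sA (sX Z4))^(12:ℤ) * (Z5)^(-6:ℤ) * (sA (Z5))^(-6:ℤ) * (sX Z5)^(12:ℤ) * (sA (sX Z6))^(-12:ℤ) * (sX Z7)^(12:ℤ) := by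
    unfold Z1 Z2 Z3 Z4 Z5 Z6 Z7
    simp only [map_mul, map_inv, map_zpow, sAsA, sXsX, sXsA]
    refine Additive.ofMul.injective ?_
    simp only [ofMul_mul, ofMul_inv, ofMul_zpow, ofMul_pow]
    abel
  rw [hZ1, hZ2, hZ3, hZ4, hZ5, hZ6, hZ7] at key
  simp only [map_one, one_zpow, mul_one, one_mul] at key
  exact key

lemma hyx : y = x := by
  have h := congrArg (Subtype.val) goalE
  simp only [OneMemClass.coe_one] at h
  have h2 : x⁻¹ * y = 1 := h
  exact (inv_mul_eq_one.mp h2).symm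

lemma hzx : z = x := by
  have h := congrArg (Subtype.val) goalF
  simp only [OneMemClass.coe_one] at h
  have h2 : x⁻¹ * z = 1 := h
  exact (inv_mul_eq_one.mp h2).symm

lemma ha2 : a^2 = 1 := by
  have h := congrArg (Subtype.val) goalA
  simp only [OneMemClass.coe_one] at h
  have h2 : a^2 = 1 := h
  exact h2

lemma hd3 : (a⁻¹*b)^3 = 1 := by
  have h := congrArg (Subtype.val) goalD3
  simp only [OneMemClass.coe_one] at h
  have h2 : ((a⁻¹*b) : M)^(3:ℤ) = 1 := by
    rw [← h]; push_cast; rfl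
  exact_mod_cast h2

lemma hb2 : b^2 = 1 := by
  have h := rel7
  rw [hzx, hyx] at h
  rw [← h]; group

lemma hx2 : x^2 = 1 := by
  rw [rel8, hb2, mul_one, ← pow_two, ha2]

lemma hax : a * x = x * a := by
  have h := rel2; rwa [hzx] at h

lemma ainv : a⁻¹ = a := by
  apply inv_eq_of_mul_eq_one_left
  rw [← pow_two, ha2]

lemma binv : b⁻¹ = b := by
  apply inv_eq_of_mul_eq_one_left
  rw [← pow_two, hb2]

lemma xinv : x⁻¹ = x := by
  apply inv_eq_of_mul_eq_one_left
  rw [← pow_two, hx2]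

lemma hab3 : (a*b)^3 = 1 := by
  have h := hd3; rwa [ainv] at h

lemma hba3 : (b*a)^3 = 1 := by
  have e2 : a*b*(a*b)*(a*b) = 1 := by
    have : (a*b)^3 = a*b*(a*b)*(a*b) := by rw [pow_succ, pow_succ, pow_one]
    rw [← this]; exact hab3
  have e1 : (b*a)^3 = b*a*(b*a)*(b*a) := by rw [pow_succ, pow_succ, pow_one]
  rw [e1]
  calc b*a*(b*a)*(b*a) = b*(a*b*(a*b)*(a*b))*b⁻¹ := by group
    _ = b*1*b⁻¹ := by rw [e2]
    _ = 1 := by group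

noncomputable def t : M := x*b*a
noncomputable def u : M := a

lemma hu2 : u^2 = 1 := ha2

lemma ht2 : t^2 = b*a*b*a := by
  unfold t
  rw [pow_two]
  calc (x*b*a)*(x*b*a) = x*b*(a*x)*b*a := by group
    _ = x*b*(x*a)*b*a := by rw [hax]
    _ = x*(b*x)*a*b*a := by group
    _ = x*(x*b)*a*b*a := by rw [rel3]
    _ = x^2*(b*a*b*a) := by rw [pow_two]; group
    _ = b*a*b*a := by rw [hx2, one_mul]

lemma ht6 : t^6 = 1 := by
  have h1 : t^6 = (t^2)^3 := by rw [← pow_mul]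
  have h2 : b*a*b*a = (b*a)^2 := by rw [pow_two]; group
  rw [h1, ht2, h2, ← pow_mul, show (2*3 : ℕ) = 3*2 from rfl, pow_mul, hba3, one_pow]

lemma hut : u*t*u⁻¹ = t⁻¹ := by
  unfold t u
  have h1 : (x*b*a)⁻¹ = a⁻¹*b⁻¹*x⁻¹ := by group
  rw [h1, ainv, binv, xinv]
  calc a*(x*b*a)*a = a*(x*b)*(a*a) := by group
    _ = a*(x*b)*a^2 := by rw [pow_two]
    _ = a*(x*b) := by rw [ha2, mul_one]
    _ = a*(b*x) := by rw [← rel3]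
    _ = a*b*x := by group

lemma expr_x : x = t^3 := by
  have h : t^3 = x := by
    calc t^3 = t^2 * t := by group
      _ = (b*a*b*a)*(x*b*a) := by rw [ht2]; rfl
      _ = b*a*b*(a*x)*b*a := by group
      _ = b*a*b*(x*a)*b*a := by rw [hax]
      _ = b*a*(b*x)*a*b*a := by group
      _ = b*a*(x*b)*a*b*a := by rw [rel3]
      _ = b*(a*x)*b*a*b*a := by group
      _ = b*(x*a)*b*a*b*a := by rw [hax]
      _ = (b*x)*a*b*a*b*a := by group
      _ = (x*b)*a*b*a*b*a := by rw [rel3]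
      _ = x*(b*a*(b*a)*(b*a)) := by group
      _ = x*(b*a)^3 := by rw [pow_succ, pow_succ, pow_one]
      _ = x*1 := by rw [hba3]
      _ = x := mul_one x
  exact h.symm

lemma expr_b : b = u*t^2 := by
  have h : u*t^2 = b := by
    unfold u
    calc a*t^2 = a*(b*a*b*a) := by rw [ht2]
      _ = (a*b*(a*b)*(a*b))*(b⁻¹*a⁻¹)*a := by group
      _ = (a*b)^3*(b⁻¹*a⁻¹)*a := by rw [pow_succ, pow_succ, pow_one]
      _ = 1*(b⁻¹*a⁻¹)*a := by rw [hab3]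
      _ = b⁻¹ := by group
      _ = b := binv
  exact h.symm

lemma uinv : u⁻¹ = u := by
  apply inv_eq_of_mul_eq_one_left
  rw [← pow_two, hu2]

lemma tpow (i j : ZMod 6) : t^((i+j).val) = t^(i.val) * t^(j.val) := by
  rw [ZMod.val_add, ← pow_eq_pow_mod _ ht6, pow_add]

lemma uconj (n : ℕ) : u * t^n * u⁻¹ = (t^n)⁻¹ := by
  rw [← conj_pow, hut, inv_pow]

lemma tpow_u (n : ℕ) : t^n * u = u * (t^n)⁻¹ := by
  have h := uconj n
  calc t^n * u = u * (u⁻¹ * (t^n) * u) := by group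
    _ = u * (u * (t^n) * u⁻¹) := by rw [uinv]
    _ = u * (t^n)⁻¹ := by rw [h]

lemma tpow_sub (i j : ZMod 6) : t^((j-i).val) = (t^(i.val))⁻¹ * t^(j.val) := by
  have h := tpow (j-i) i
  rw [sub_add_cancel] at h
  have hc : Commute (t^((j-i).val)) (t^(i.val)) := (Commute.refl t).pow_pow _ _
  rw [hc.eq] at h
  rw [eq_comm, inv_mul_eq_iff_eq_mul, ← h]

open DihedralGroup in
noncomputable def psi : DihedralGroup 6 →* M where
  toFun g := match g with
    | .r i => t^(i.val)
    | .sr i => u * t^(i.val)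
  map_one' := by
    show t^((0 : ZMod 6)).val = 1
    rw [ZMod.val_zero, pow_zero]
  map_mul' := by
    rintro (i | i) (j | j)
    · show t^((i+j).val) = t^(i.val) * t^(j.val)
      exact tpow i j
    · show u * t^((j-i).val) = t^(i.val) * (u * t^(j.val))
      rw [tpow_sub]
      calc u * ((t^(i.val))⁻¹ * t^(j.val)) = (u * (t^(i.val))⁻¹) * t^(j.val) := by group
        _ = (t^(i.val) * u) * t^(j.val) := by rw [← tpow_u]
        _ = t^(i.val) * (u * t^(j.val)) := by group
    · show u * t^((i+j).val) = (u * t^(i.val)) * t^(j.val)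
      rw [tpow, mul_assoc]
    · show t^((j-i).val) = (u * t^(i.val)) * (u * t^(j.val))
      rw [tpow_sub]
      refine Eq.symm ?_
      calc (u * t^(i.val)) * (u * t^(j.val))
          = (u*t^(i.val)*u⁻¹)*u^2*t^(j.val) := by group
        _ = (t^(i.val))⁻¹*u^2*t^(j.val) := by rw [uconj]
        _ = (t^(i.val))⁻¹*(1:M)*t^(j.val) := by rw [hu2]
        _ = (t^(i.val))⁻¹*t^(j.val) := by group

lemma psi_r (i : ZMod 6) : psi (DihedralGroup.r i) = t^(i.val) := rfl
lemma psi_sr (i : ZMod 6) : psi (DihedralGroup.sr i) = u * t^(i.val) := rfl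

open DihedralGroup in
def fgen : Sum (Fin (3-1)) (Fin 3) → DihedralGroup 6
  | .inl i => if (i : ℕ) = 0 then .sr 0 else .sr 2
  | .inr _ => .r 3

lemma hrels : ∀ w ∈ vanBuskirkRels 3, FreeGroup.lift fgen w = 1 := by
  rintro w (⟨i, j, hij, rfl⟩ | ⟨i, h, h', rfl⟩ | ⟨i, j, h1, h2, rfl⟩ |
    ⟨i, h, hi, hi', rfl⟩ | ⟨i, h, hi, hi', rfl⟩ | ⟨h, rfl⟩)
  · exfalso
    have := i.isLt
    have := j.isLt
    omega
  · have hi0 : i = 0 := by omega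
    subst hi0
    simp only [map_mul, map_inv, FreeGroup.lift_apply_of, fgen]
    norm_num
    decide
  · obtain ⟨iv, hi⟩ := i
    obtain ⟨jv, hj⟩ := j
    simp only [map_mul, map_inv, FreeGroup.lift_apply_of, fgen]
    have hiv : iv = 0 ∨ iv = 1 := by omega
    rcases hiv with rfl | rfl <;> norm_num <;> decide
  · have hi0 : i = 0 ∨ i = 1 := by omega
    rcases hi0 with rfl | rfl <;>
      simp only [map_mul, map_inv, FreeGroup.lift_apply_of, fgen] <;> norm_num <;> decide
  · have hi0 : i = 0 ∨ i = 1 := by omega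
    rcases hi0 with rfl | rfl <;>
      simp only [map_mul, map_inv, map_pow, FreeGroup.lift_apply_of, fgen] <;> norm_num <;> decide
  · simp only [map_mul, map_inv, map_pow, FreeGroup.lift_apply_of]
    norm_num [List.finRange, List.range, List.range.loop, fgen]
    decide

lemma keyRot : ∀ g h : DihedralGroup 6, ∃ k, ⁅g,h⁆ = DihedralGroup.r k := by decide

lemma keyRot2 : ∀ g h : DihedralGroup 6,
    (∃ i, g = DihedralGroup.r i) → (∃ j, h = DihedralGroup.r j) → ⁅g,h⁆ = 1 := by decide

def rotS : Subgroup (DihedralGroup 6) where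
  carrier := {g | ∃ i, g = DihedralGroup.r i}
  mul_mem' := by
    rintro g h ⟨i, rfl⟩ ⟨j, rfl⟩
    exact ⟨i+j, (DihedralGroup.r_mul_r i j)⟩
  one_mem' := ⟨0, DihedralGroup.one_def⟩
  inv_mem' := by
    rintro g ⟨i, rfl⟩
    exact ⟨-i, rfl⟩

lemma dsD12 : derivedSeries (DihedralGroup 6) 2 = ⊥ := by
  have h1 : derivedSeries (DihedralGroup 6) 1 ≤ rotS := by
    rw [derivedSeries_one]
    exact Subgroup.commutator_le.mpr (fun g _ h _ => keyRot g h)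
  have h2 : derivedSeries (DihedralGroup 6) 2 ≤ ⊥ := by
    rw [derivedSeries_succ]
    refine (Subgroup.commutator_mono h1 h1).trans ?_
    refine Subgroup.commutator_le.mpr ?_
    intro g hg h hh
    rw [Subgroup.mem_bot]
    exact keyRot2 g h hg hh
  exact le_bot_iff.mp h2

noncomputable def phi : G →* DihedralGroup 6 := PresentedGroup.toGroup hrels

lemma hker : ∀ g ∈ derivedSeries G 2, phi g = 1 := by
  intro g hg
  have h := map_derivedSeries_le_derivedSeries phi 2 (Subgroup.mem_map_of_mem phi hg)
  rwa [dsD12, Subgroup.mem_bot] at h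

noncomputable def phibar : M →* DihedralGroup 6 := QuotientGroup.lift _ phi hker

lemma phibar_pi (g : G) : phibar (pi g) = phi g := rfl

lemma phi_a : phibar a = DihedralGroup.sr 0 := by
  show phibar (pi ga) = _
  rw [phibar_pi]
  unfold phi ga
  rw [PresentedGroup.toGroup.of]
  norm_num [fgen]

lemma phi_b : phibar b = DihedralGroup.sr 2 := by
  show phibar (pi gb) = _
  rw [phibar_pi]
  unfold phi gb
  rw [PresentedGroup.toGroup.of]
  norm_num [fgen]

lemma phi_x : phibar x = DihedralGroup.r 3 := by
  show phibar (pi gx) = _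
  rw [phibar_pi]
  unfold phi gx
  rw [PresentedGroup.toGroup.of]
  rfl

lemma phi_t : phibar t = DihedralGroup.r 1 := by
  unfold t
  rw [map_mul, map_mul, phi_x, phi_b, phi_a]
  decide

lemma phi_u : phibar u = DihedralGroup.sr 0 := phi_a

lemma comp1 : phibar.comp psi = MonoidHom.id (DihedralGroup 6) := by
  apply MonoidHom.ext
  rintro (i | i)
  · show phibar (psi (DihedralGroup.r i)) = DihedralGroup.r i
    rw [psi_r, map_pow, phi_t, DihedralGroup.r_one_pow, ZMod.natCast_zmod_val]
  · show phibar (psi (DihedralGroup.sr i)) = DihedralGroup.sr i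
    rw [psi_sr, map_mul, map_pow, phi_t, phi_u, DihedralGroup.r_one_pow,
      DihedralGroup.sr_mul_r, zero_add, ZMod.natCast_zmod_val]

lemma comp2 : psi.comp phibar = MonoidHom.id M := by
  apply QuotientGroup.monoidHom_ext
  apply PresentedGroup.ext
  rintro (⟨iv, hi⟩ | ⟨jv, hj⟩)
  · have : iv = 0 ∨ iv = 1 := by omega
    rcases this with rfl | rfl
    · show psi (phibar a) = a
      rw [phi_a, psi_sr, ZMod.val_zero, pow_zero, mul_one]
      rfl
    · show psi (phibar b) = b
      rw [phi_b, psi_sr, show ((2 : ZMod 6)).val = 2 from rfl]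
      exact expr_b.symm
  · have : jv = 0 ∨ jv = 1 ∨ jv = 2 := by omega
    rcases this with rfl | rfl | rfl
    · show psi (phibar x) = x
      rw [phi_x, psi_r, show ((3 : ZMod 6)).val = 3 from rfl]
      exact expr_x.symm
    · show psi (phibar y) = y
      rw [hyx, phi_x, psi_r, show ((3 : ZMod 6)).val = 3 from rfl]
      exact expr_x.symm
    · show psi (phibar z) = z
      rw [hzx, phi_x, psi_r, show ((3 : ZMod 6)).val = 3 from rfl]
      exact expr_x.symm

end B3X

/-- The quotient of the braid group `B₃(ℝP²)` by its second derived subgroup is isomorphic to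
the dihedral group `D₁₂` of order 12 (`DihedralGroup 6`). -/
theorem B3RP2_mod_second_derived_eq_D12 :
    Nonempty ((BnRP2 3 ⧸ derivedSeries (BnRP2 3) 2) ≃* DihedralGroup 6) :=
  ⟨MonoidHom.toMulEquiv B3X.phibar B3X.psi B3X.comp2 B3X.comp1⟩
end

section
/- Let L be the group with presentation ⟨ w₁, w₂, w₃, w₄, t | w_i² = t³ = 1, w_iw_j = w_jw_i, tw₁t^{-1} = w₂, tw₂t^{-1} = w₁w₂, tw₃t^{-1} = w₄, tw₄t^{-1} = w₃w₄ ⟩. Then L is isomorphic to the semidirect product (ℤ/2)⁴ ⋊ ℤ/3, where the generator of ℤ/3 cyclically permutes the three nontrivial elements of the first two ℤ/2-coordinates and of the last two ℤ/2-coordinates. In particular L has order 48 and its second derived subgroup L^{(2)} is trivial. -/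
namespace Stmt16

open FreeGroup

/-- The elementary abelian group `(ℤ/2)⁴`, coordinates `(w₁, w₂, w₃, w₄)`. -/
abbrev V : Type := ZMod 2 × ZMod 2 × ZMod 2 × ZMod 2

/-- The automorphism of `(ℤ/2)⁴` cyclically permuting the three nontrivial elements of the
first two coordinates and of the last two coordinates:
`w₁ ↦ w₂ ↦ w₁w₂ ↦ w₁` and `w₃ ↦ w₄ ↦ w₃w₄ ↦ w₃`. -/
def cyc : V ≃+ V where
  toFun p := (p.2.1, p.1 + p.2.1, p.2.2.2, p.2.2.1 + p.2.2.2)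
  invFun p := (p.1 + p.2.1, p.1, p.2.2.1 + p.2.2.2, p.2.2.1)
  left_inv := fun p => by revert p; decide
  right_inv := fun p => by revert p; decide
  map_add' := fun p q => by revert p q; decide

/-- `cyc` as a multiplicative automorphism. -/
def mulCyc : MulAut (Multiplicative V) := AddEquiv.toMultiplicative cyc

lemma mulCyc_cube : mulCyc ^ 3 = 1 :=
  MulEquiv.ext (by decide)

/-- The action of `ℤ/3` on `(ℤ/2)⁴` whose generator acts by `cyc`. -/
def actZ3 : Multiplicative (ZMod 3) →* MulAut (Multiplicative V) where
  toFun k := mulCyc ^ (Multiplicative.toAdd k).val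
  map_one' := by simp
  map_mul' a b := by
    show mulCyc ^ (Multiplicative.toAdd a + Multiplicative.toAdd b).val = _
    rw [ZMod.val_add, ← pow_eq_pow_mod _ mulCyc_cube, pow_add]

/-- Generators of `L`: 0,1,2,3 = w₁,w₂,w₃,w₄ and 4 = t. -/
abbrev w₁ : FreeGroup (Fin 5) := of 0
abbrev w₂ : FreeGroup (Fin 5) := of 1
abbrev w₃ : FreeGroup (Fin 5) := of 2
abbrev w₄ : FreeGroup (Fin 5) := of 3
abbrev t : FreeGroup (Fin 5) := of 4

/-- The defining relators of `L`. -/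
def LRels : Set (FreeGroup (Fin 5)) :=
  { w₁ ^ 2, w₂ ^ 2, w₃ ^ 2, w₄ ^ 2, t ^ 3,
    w₁ * w₂ * w₁⁻¹ * w₂⁻¹, w₁ * w₃ * w₁⁻¹ * w₃⁻¹, w₁ * w₄ * w₁⁻¹ * w₄⁻¹,
    w₂ * w₃ * w₂⁻¹ * w₃⁻¹, w₂ * w₄ * w₂⁻¹ * w₄⁻¹, w₃ * w₄ * w₃⁻¹ * w₄⁻¹,
    t * w₁ * t⁻¹ * w₂⁻¹, t * w₂ * t⁻¹ * (w₁ * w₂)⁻¹,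
    t * w₃ * t⁻¹ * w₄⁻¹, t * w₄ * t⁻¹ * (w₃ * w₄)⁻¹ }

/-- The group `L = ⟨w₁,…,w₄,t | …⟩`. -/
abbrev L : Type := PresentedGroup LRels

-- === auxiliary constructions ===

abbrev SG : Type := Multiplicative V ⋊[actZ3] Multiplicative (ZMod 3)

instance : DecidableEq SG := fun a b =>
  decidable_of_iff (a.left = b.left ∧ a.right = b.right)
    (by cases a; cases b; simp [SemidirectProduct.ext_iff])

/-- generators of `L` -/
abbrev X (i : Fin 5) : L := PresentedGroup.of i

lemma mk_rel {r : FreeGroup (Fin 5)} (h : r ∈ LRels) : PresentedGroup.mk LRels r = 1 :=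
  (QuotientGroup.eq_one_iff r).2 (Subgroup.subset_normalClosure h)

lemma sq0 : X 0 ^ 2 = 1 := by exact mk_rel (show w₁ ^ 2 ∈ LRels by simp [LRels])
lemma sq1 : X 1 ^ 2 = 1 := by exact mk_rel (show w₂ ^ 2 ∈ LRels by simp [LRels])
lemma sq2 : X 2 ^ 2 = 1 := by exact mk_rel (show w₃ ^ 2 ∈ LRels by simp [LRels])
lemma sq3 : X 3 ^ 2 = 1 := by exact mk_rel (show w₄ ^ 2 ∈ LRels by simp [LRels])
lemma cube4 : X 4 ^ 3 = 1 := by exact mk_rel (show t ^ 3 ∈ LRels by simp [LRels])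

lemma comm_of_rel {i j : Fin 5}
    (h : PresentedGroup.mk LRels (of i * of j * (of i)⁻¹ * (of j)⁻¹) = 1) :
    Commute (X i) (X j) := by
  have h' : X i * X j * (X i)⁻¹ * (X j)⁻¹ = 1 := h
  exact (mul_inv_eq_iff_eq_mul.mp (mul_inv_eq_one.mp h'))

lemma comm01 : Commute (X 0) (X 1) := comm_of_rel (mk_rel (by simp [LRels]))
lemma comm02 : Commute (X 0) (X 2) := comm_of_rel (mk_rel (by simp [LRels]))
lemma comm03 : Commute (X 0) (X 3) := comm_of_rel (mk_rel (by simp [LRels]))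
lemma comm12 : Commute (X 1) (X 2) := comm_of_rel (mk_rel (by simp [LRels]))
lemma comm13 : Commute (X 1) (X 3) := comm_of_rel (mk_rel (by simp [LRels]))
lemma comm23 : Commute (X 2) (X 3) := comm_of_rel (mk_rel (by simp [LRels]))

lemma conj0 : X 4 * X 0 * (X 4)⁻¹ = X 1 := by
  have h : X 4 * X 0 * (X 4)⁻¹ * (X 1)⁻¹ = 1 :=
    mk_rel (show t * w₁ * t⁻¹ * w₂⁻¹ ∈ LRels by simp [LRels])
  exact mul_inv_eq_one.mp h
lemma conj1 : X 4 * X 1 * (X 4)⁻¹ = X 0 * X 1 := by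
  have h : X 4 * X 1 * (X 4)⁻¹ * (X 0 * X 1)⁻¹ = 1 :=
    mk_rel (show t * w₂ * t⁻¹ * (w₁ * w₂)⁻¹ ∈ LRels by simp [LRels])
  exact mul_inv_eq_one.mp h
lemma conj2 : X 4 * X 2 * (X 4)⁻¹ = X 3 := by
  have h : X 4 * X 2 * (X 4)⁻¹ * (X 3)⁻¹ = 1 :=
    mk_rel (show t * w₃ * t⁻¹ * w₄⁻¹ ∈ LRels by simp [LRels])
  exact mul_inv_eq_one.mp h
lemma conj3 : X 4 * X 3 * (X 4)⁻¹ = X 2 * X 3 := by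
  have h : X 4 * X 3 * (X 4)⁻¹ * (X 2 * X 3)⁻¹ = 1 :=
    mk_rel (show t * w₄ * t⁻¹ * (w₃ * w₄)⁻¹ ∈ LRels by simp [LRels])
  exact mul_inv_eq_one.mp h


/-- hom out of `Multiplicative (ZMod n)` determined by an element of order dividing `n`. -/
def powHom {H : Type*} [Group H] (n : ℕ) [NeZero n] (x : H) (hx : x ^ n = 1) :
    Multiplicative (ZMod n) →* H where
  toFun k := x ^ (Multiplicative.toAdd k).val
  map_one' := by
    show x ^ (0 : ZMod n).val = 1
    simp
  map_mul' a b := by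
    show x ^ (Multiplicative.toAdd a + Multiplicative.toAdd b).val = _
    rw [ZMod.val_add, ← pow_eq_pow_mod _ hx, pow_add]

def fT : Multiplicative (ZMod 3) →* L := powHom 3 (X 4) cube4

def f34 : Multiplicative (ZMod 2 × ZMod 2) →* L :=
  ((powHom 2 (X 2) sq2).noncommCoprod (powHom 2 (X 3) sq3)
    (fun _ _ => comm23.pow_pow _ _)).comp
    (MulEquiv.prodMultiplicative (G := ZMod 2) (H := ZMod 2)).toMonoidHom

lemma f34_apply (n : Multiplicative (ZMod 2 × ZMod 2)) :
    f34 n = X 2 ^ (Multiplicative.toAdd n).1.val * X 3 ^ (Multiplicative.toAdd n).2.val := rfl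

def f234 : Multiplicative (ZMod 2 × ZMod 2 × ZMod 2) →* L :=
  ((powHom 2 (X 1) sq1).noncommCoprod f34
    (fun _ n => by
      rw [f34_apply]
      exact Commute.mul_right (comm12.pow_pow _ _) (comm13.pow_pow _ _))).comp
    (MulEquiv.prodMultiplicative (G := ZMod 2) (H := ZMod 2 × ZMod 2)).toMonoidHom

lemma f234_apply (n : Multiplicative (ZMod 2 × ZMod 2 × ZMod 2)) :
    f234 n = X 1 ^ (Multiplicative.toAdd n).1.val *
      (X 2 ^ (Multiplicative.toAdd n).2.1.val * X 3 ^ (Multiplicative.toAdd n).2.2.val) := rfl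

def fV : Multiplicative V →* L :=
  ((powHom 2 (X 0) sq0).noncommCoprod f234
    (fun _ n => by
      rw [f234_apply]
      exact Commute.mul_right (comm01.pow_pow _ _)
        (Commute.mul_right (comm02.pow_pow _ _) (comm03.pow_pow _ _)))).comp
    (MulEquiv.prodMultiplicative (G := ZMod 2) (H := ZMod 2 × ZMod 2 × ZMod 2)).toMonoidHom

lemma fV_apply (p q r s : ZMod 2) :
    fV (Multiplicative.ofAdd (p, q, r, s)) =
      X 0 ^ p.val * (X 1 ^ q.val * (X 2 ^ r.val * X 3 ^ s.val)) := rfl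

/-- extensionality for homs out of `Multiplicative V` -/
lemma V_ext {M : Type*} [Monoid M] {f g : Multiplicative V →* M}
    (h1 : f (.ofAdd (1,0,0,0)) = g (.ofAdd (1,0,0,0)))
    (h2 : f (.ofAdd (0,1,0,0)) = g (.ofAdd (0,1,0,0)))
    (h3 : f (.ofAdd (0,0,1,0)) = g (.ofAdd (0,0,1,0)))
    (h4 : f (.ofAdd (0,0,0,1)) = g (.ofAdd (0,0,0,1))) : f = g := by
  have e1 : ∀ c : ZMod 2, f (.ofAdd (c,0,0,0)) = g (.ofAdd (c,0,0,0)) := by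
    intro c
    rcases (by decide : ∀ c : ZMod 2, c = 0 ∨ c = 1) c with rfl | rfl
    · have h : (Multiplicative.ofAdd (((0:ZMod 2),(0:ZMod 2),(0:ZMod 2),(0:ZMod 2)) : V)) = 1 := rfl
      rw [h, _root_.map_one, _root_.map_one]
    · exact h1
  have e2 : ∀ c : ZMod 2, f (.ofAdd (0,c,0,0)) = g (.ofAdd (0,c,0,0)) := by
    intro c
    rcases (by decide : ∀ c : ZMod 2, c = 0 ∨ c = 1) c with rfl | rfl
    · have h : (Multiplicative.ofAdd (((0:ZMod 2),(0:ZMod 2),(0:ZMod 2),(0:ZMod 2)) : V)) = 1 := rfl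
      rw [h, _root_.map_one, _root_.map_one]
    · exact h2
  have e3 : ∀ c : ZMod 2, f (.ofAdd (0,0,c,0)) = g (.ofAdd (0,0,c,0)) := by
    intro c
    rcases (by decide : ∀ c : ZMod 2, c = 0 ∨ c = 1) c with rfl | rfl
    · have h : (Multiplicative.ofAdd (((0:ZMod 2),(0:ZMod 2),(0:ZMod 2),(0:ZMod 2)) : V)) = 1 := rfl
      rw [h, _root_.map_one, _root_.map_one]
    · exact h3
  have e4 : ∀ c : ZMod 2, f (.ofAdd (0,0,0,c)) = g (.ofAdd (0,0,0,c)) := by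
    intro c
    rcases (by decide : ∀ c : ZMod 2, c = 0 ∨ c = 1) c with rfl | rfl
    · have h : (Multiplicative.ofAdd (((0:ZMod 2),(0:ZMod 2),(0:ZMod 2),(0:ZMod 2)) : V)) = 1 := rfl
      rw [h, _root_.map_one, _root_.map_one]
    · exact h4
  refine MonoidHom.ext fun v => ?_
  have key : v = Multiplicative.ofAdd ((Multiplicative.toAdd v).1, 0, 0, 0) *
      (Multiplicative.ofAdd (0, (Multiplicative.toAdd v).2.1, 0, 0) *
        (Multiplicative.ofAdd (0, 0, (Multiplicative.toAdd v).2.2.1, 0) *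
          Multiplicative.ofAdd (0, 0, 0, (Multiplicative.toAdd v).2.2.2))) := by
    revert v; decide
  rw [key]
  simp only [_root_.map_mul, e1, e2, e3, e4]

/-- extensionality for homs out of `Multiplicative (ZMod 3)` -/
lemma Z3_ext {M : Type*} [Monoid M] {f g : Multiplicative (ZMod 3) →* M}
    (h1 : f (.ofAdd 1) = g (.ofAdd 1)) : f = g := by
  refine MonoidHom.ext fun k => ?_
  have key : k = Multiplicative.ofAdd (1 : ZMod 3) ^ (Multiplicative.toAdd k).val := by
    revert k; decide
  rw [key, _root_.map_pow, _root_.map_pow, h1]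


lemma fT_apply (k : ZMod 3) : fT (.ofAdd k) = X 4 ^ k.val := rfl

def gen : Fin 5 → SG :=
  ![.inl (.ofAdd (1,0,0,0)), .inl (.ofAdd (0,1,0,0)), .inl (.ofAdd (0,0,1,0)),
    .inl (.ofAdd (0,0,0,1)), .inr (.ofAdd 1)]

lemma gen_rels : ∀ r ∈ LRels, FreeGroup.lift gen r = 1 := by
  intro r hr
  simp only [LRels, Set.mem_insert_iff, Set.mem_singleton_iff] at hr
  rcases hr with rfl|rfl|rfl|rfl|rfl|rfl|rfl|rfl|rfl|rfl|rfl|rfl|rfl|rfl|rfl <;>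
    · simp only [_root_.map_mul, _root_.map_inv, _root_.map_pow, FreeGroup.lift_apply_of]
      decide

def φ : L →* SG := PresentedGroup.toGroup gen_rels

lemma φ_of (i : Fin 5) : φ (PresentedGroup.of i) = gen i := PresentedGroup.toGroup.of gen_rels

/-- the compatibility property -/
def P (g : Multiplicative (ZMod 3)) : Prop :=
  fV.comp (actZ3 g).toMonoidHom = (MulAut.conj (fT g)).toMonoidHom.comp fV

lemma P_one : P 1 := by
  unfold P
  ext v
  simp

lemma P_mul {g g' : Multiplicative (ZMod 3)} (h : P g) (h' : P g') : P (g * g') := by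
  unfold P at *
  refine MonoidHom.ext fun v => ?_
  have hv := DFunLike.congr_fun h ((actZ3 g') v)
  have hv' := DFunLike.congr_fun h' v
  simp only [MonoidHom.comp_apply, MulEquiv.coe_toMonoidHom, MulAut.conj_apply] at hv hv' ⊢
  calc fV ((actZ3 (g * g')) v) = fV ((actZ3 g) ((actZ3 g') v)) := by
        rw [_root_.map_mul actZ3 g g']; rfl
    _ = fT g * fV ((actZ3 g') v) * (fT g)⁻¹ := hv
    _ = fT g * (fT g' * fV v * (fT g')⁻¹) * (fT g)⁻¹ := by rw [hv']
    _ = fT (g * g') * fV v * (fT (g * g'))⁻¹ := by rw [_root_.map_mul fT g g']; group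

lemma P_gen : P (.ofAdd 1) := by
  unfold P
  apply V_ext <;>
    simp only [MonoidHom.comp_apply, MulEquiv.coe_toMonoidHom, MulAut.conj_apply]
  · rw [show (actZ3 (.ofAdd 1)) (.ofAdd (1,0,0,0)) = (.ofAdd ((0:ZMod 2),1,0,0)) from by decide,
      fV_apply, fV_apply, fT_apply]
    simp only [show ((0:ZMod 2)).val = 0 from rfl, show ((1:ZMod 2)).val = 1 from rfl,
      show ((1:ZMod 3)).val = 1 from rfl, pow_zero, pow_one, mul_one, one_mul]
    exact conj0.symm
  · rw [show (actZ3 (.ofAdd 1)) (.ofAdd (0,1,0,0)) = (.ofAdd ((1:ZMod 2),1,0,0)) from by decide,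
      fV_apply, fV_apply, fT_apply]
    simp only [show ((0:ZMod 2)).val = 0 from rfl, show ((1:ZMod 2)).val = 1 from rfl,
      show ((1:ZMod 3)).val = 1 from rfl, pow_zero, pow_one, mul_one, one_mul]
    exact conj1.symm
  · rw [show (actZ3 (.ofAdd 1)) (.ofAdd (0,0,1,0)) = (.ofAdd ((0:ZMod 2),0,0,1)) from by decide,
      fV_apply, fV_apply, fT_apply]
    simp only [show ((0:ZMod 2)).val = 0 from rfl, show ((1:ZMod 2)).val = 1 from rfl,
      show ((1:ZMod 3)).val = 1 from rfl, pow_zero, pow_one, mul_one, one_mul]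
    exact conj2.symm
  · rw [show (actZ3 (.ofAdd 1)) (.ofAdd (0,0,0,1)) = (.ofAdd ((0:ZMod 2),0,1,1)) from by decide,
      fV_apply, fV_apply, fT_apply]
    simp only [show ((0:ZMod 2)).val = 0 from rfl, show ((1:ZMod 2)).val = 1 from rfl,
      show ((1:ZMod 3)).val = 1 from rfl, pow_zero, pow_one, mul_one, one_mul]
    exact conj3.symm

lemma hcomp : ∀ g : Multiplicative (ZMod 3),
    fV.comp (actZ3 g).toMonoidHom = (MulAut.conj (fT g)).toMonoidHom.comp fV := by
  intro g
  have hg : g = Multiplicative.ofAdd (Multiplicative.toAdd g) := rfl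
  rcases (by decide : ∀ k : ZMod 3, k = 0 ∨ k = 1 ∨ k = 2) (Multiplicative.toAdd g)
    with h | h | h <;> rw [hg, h]
  · exact P_one
  · exact P_gen
  · rw [show (Multiplicative.ofAdd (2 : ZMod 3)) =
        Multiplicative.ofAdd (1 : ZMod 3) * Multiplicative.ofAdd (1 : ZMod 3) from by decide]
    exact P_mul P_gen P_gen

def ψ : SG →* L := SemidirectProduct.lift fV fT hcomp

lemma ψ_inl (n : Multiplicative V) : ψ (.inl n) = fV n := SemidirectProduct.lift_inl _ _ _ n
lemma ψ_inr (g : Multiplicative (ZMod 3)) : ψ (.inr g) = fT g := SemidirectProduct.lift_inr _ _ _ g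

lemma eq1 : ψ.comp φ = MonoidHom.id L := by
  apply PresentedGroup.ext
  intro i
  rcases (by decide : ∀ i : Fin 5, i = 0 ∨ i = 1 ∨ i = 2 ∨ i = 3 ∨ i = 4) i
    with rfl | rfl | rfl | rfl | rfl <;>
    simp only [MonoidHom.comp_apply, MonoidHom.id_apply]
  · rw [φ_of, show gen 0 = SemidirectProduct.inl (.ofAdd (1,0,0,0)) from rfl, ψ_inl, fV_apply]
    simp [show ((0:ZMod 2)).val = 0 from rfl, show ((1:ZMod 2)).val = 1 from rfl]
  · rw [φ_of, show gen 1 = SemidirectProduct.inl (.ofAdd (0,1,0,0)) from rfl, ψ_inl, fV_apply]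
    simp [show ((0:ZMod 2)).val = 0 from rfl, show ((1:ZMod 2)).val = 1 from rfl]
  · rw [φ_of, show gen 2 = SemidirectProduct.inl (.ofAdd (0,0,1,0)) from rfl, ψ_inl, fV_apply]
    simp [show ((0:ZMod 2)).val = 0 from rfl, show ((1:ZMod 2)).val = 1 from rfl]
  · rw [φ_of, show gen 3 = SemidirectProduct.inl (.ofAdd (0,0,0,1)) from rfl, ψ_inl, fV_apply]
    simp [show ((0:ZMod 2)).val = 0 from rfl, show ((1:ZMod 2)).val = 1 from rfl]
  · rw [φ_of, show gen 4 = SemidirectProduct.inr (.ofAdd 1) from rfl, ψ_inr, fT_apply]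
    simp [show ((1:ZMod 3)).val = 1 from rfl]

lemma eq2 : φ.comp ψ = MonoidHom.id SG := by
  apply SemidirectProduct.hom_ext
  · apply V_ext <;>
      simp only [MonoidHom.comp_apply, MonoidHom.id_apply, ψ_inl]
    · rw [fV_apply]
      simp only [show ((0:ZMod 2)).val = 0 from rfl, show ((1:ZMod 2)).val = 1 from rfl,
        pow_zero, pow_one, mul_one, one_mul]
      rw [φ_of]
      rfl
    · rw [fV_apply]
      simp only [show ((0:ZMod 2)).val = 0 from rfl, show ((1:ZMod 2)).val = 1 from rfl,
        pow_zero, pow_one, mul_one, one_mul]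
      rw [φ_of]
      rfl
    · rw [fV_apply]
      simp only [show ((0:ZMod 2)).val = 0 from rfl, show ((1:ZMod 2)).val = 1 from rfl,
        pow_zero, pow_one, mul_one, one_mul]
      rw [φ_of]
      rfl
    · rw [fV_apply]
      simp only [show ((0:ZMod 2)).val = 0 from rfl, show ((1:ZMod 2)).val = 1 from rfl,
        pow_zero, pow_one, mul_one, one_mul]
      rw [φ_of]
      rfl
  · apply Z3_ext
    simp only [MonoidHom.comp_apply, MonoidHom.id_apply, ψ_inr]
    rw [fT_apply]
    simp only [show ((1:ZMod 3)).val = 1 from rfl, pow_one]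
    rw [φ_of]
    rfl

def iso : L ≃* SG := MonoidHom.toMulEquiv φ ψ eq1 eq2

def sgEquiv : SG ≃ Multiplicative V × Multiplicative (ZMod 3) where
  toFun x := (x.left, x.right)
  invFun p := ⟨p.1, p.2⟩
  left_inv x := by cases x; rfl
  right_inv p := rfl

lemma cardL : Nat.card L = 48 := by
  rw [Nat.card_congr iso.toEquiv, Nat.card_congr sgEquiv, Nat.card_prod,
    Nat.card_eq_fintype_card, Nat.card_eq_fintype_card]
  rfl

lemma dSG : derivedSeries SG 2 = ⊥ := by
  have h1 : derivedSeries SG 1 ≤ MonoidHom.ker (SemidirectProduct.rightHom) := by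
    rw [derivedSeries_one]
    exact Abelianization.commutator_subset_ker _
  have h2 : derivedSeries SG 2 = ⁅derivedSeries SG 1, derivedSeries SG 1⁆ :=
    derivedSeries_succ SG 1
  rw [h2, eq_bot_iff]
  refine (Subgroup.commutator_le).mpr ?_
  intro g hg h hh
  have hgr : g.right = 1 := MonoidHom.mem_ker.mp (h1 hg)
  have hhr : h.right = 1 := MonoidHom.mem_ker.mp (h1 hh)
  have hcom : g * h = h * g := by
    refine SemidirectProduct.ext ?_ ?_
    · show (g * h).left = (h * g).left
      rw [SemidirectProduct.mul_left, SemidirectProduct.mul_left, hgr, hhr]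
      simp [mul_comm]
    · show (g * h).right = (h * g).right
      rw [SemidirectProduct.mul_right, SemidirectProduct.mul_right, hgr, hhr]
  rw [Subgroup.mem_bot, commutatorElement_def, hcom]
  group

lemma dL : derivedSeries L 2 = ⊥ := by
  have hmap := map_derivedSeries_eq (f := iso.toMonoidHom) iso.surjective 2
  rw [dSG] at hmap
  exact ((derivedSeries L 2).map_eq_bot_iff_of_injective iso.injective).mp hmap

/-- `L ≅ (ℤ/2)⁴ ⋊ ℤ/3`, where the generator of `ℤ/3` cyclically permutes the three
nontrivial elements of the first two and of the last two `ℤ/2`-coordinates; in particular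
`L` has order 48 and its second derived subgroup is trivial. -/
theorem L_iso_semidirect :
    Nonempty (L ≃* (Multiplicative V ⋊[actZ3] Multiplicative (ZMod 3))) ∧
    Nat.card L = 48 ∧ derivedSeries L 2 = ⊥ := by
  exact ⟨⟨iso⟩, cardL, dL⟩

end Stmt16
end
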